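/- arXiv:1809.10390 — 6 statements merged into one kernel-verified Lean document; each statement's English description precedes it below -/
import Mathlib

section
/- For every s ∈ ℂ with Re(s) > 1 and every z in the upper half-plane, the Lipschitz summation formula holds: ∑_{n=1}^∞ n^{s−1} e^{2πi n z} = Γ(s) (2π)^{−s} e^{iπs/2} ∑_{n∈ℤ} 1/(z+n)^s. -/
open Real Complex MeasureTheory Set Filter

/-- Splitting `cpow` of a product when the arguments' sum lies in `(-π, π]`. -/
private lemma lsf_mul_cpow {x y : ℂ} (hx : x ≠ 0) (hy : y ≠ 0)
    (h : x.arg + y.arg ∈ Set.Ioc (-π) π) (c : ℂ) : (x * y) ^ c = x ^ c * y ^ c := by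
  rw [Complex.cpow_def_of_ne_zero (mul_ne_zero hx hy), Complex.cpow_def_of_ne_zero hx,
    Complex.cpow_def_of_ne_zero hy, ← Complex.exp_add, ← add_mul,
    (Complex.log_mul_eq_add_log_iff hx hy).mpr h]

private lemma lsf_integrableOn_rpow_mul_exp {σ r : ℝ} (hσ : 0 < σ) (hr : 0 < r) :
    IntegrableOn (fun t : ℝ ↦ t ^ (σ - 1) * rexp (-(r * t))) (Ioi 0) := by
  have h0 : IntegrableOn (fun x : ℝ ↦ rexp (-x) * x ^ (σ - 1)) (Ioi 0) :=
    Real.GammaIntegral_convergent hσ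
  have h1 : IntegrableOn (fun x : ℝ ↦ rexp (-(r * x)) * (r * x) ^ (σ - 1)) (Ioi 0) := by
    have := (integrableOn_Ioi_comp_mul_left_iff
      (fun x : ℝ ↦ rexp (-x) * x ^ (σ - 1)) 0 hr).mpr (by simpa using h0)
    simpa using this
  have h1' : IntegrableOn (fun x : ℝ ↦ r ^ (1 - σ) * (rexp (-(r * x)) * (r * x) ^ (σ - 1)))
      (Ioi 0) := h1.const_mul _
  refine h1'.congr_fun (fun x hx ↦ ?_) measurableSet_Ioi
  have hx0 : (0:ℝ) < x := hx
  dsimp only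
  rw [Real.mul_rpow hr.le hx0.le]
  rw [show r ^ (1-σ) * (rexp (-(r * x)) * (r ^ (σ-1) * x ^ (σ-1)))
      = (r ^ (1-σ) * r ^ (σ-1)) * (x ^ (σ-1) * rexp (-(r * x))) by ring,
    ← Real.rpow_add hr]
  norm_num

private lemma lsf_norm_cpow_mul_exp {s a : ℂ} {t : ℝ} (ht : 0 < t) :
    ‖(t:ℂ) ^ (s - 1) * Complex.exp (-(a * t))‖ = t ^ (s.re - 1) * rexp (-(a.re * t)) := by
  rw [norm_mul, Complex.norm_exp,
    Complex.norm_cpow_eq_rpow_re_of_pos ht]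
  have h1 : (s - 1).re = s.re - 1 := by simp
  have h2 : (-(a * (t:ℂ))).re = -(a.re * t) := by simp [Complex.mul_re]
  rw [h1, h2]

private lemma lsf_continuousOn_cpow {s : ℂ} :
    ContinuousOn (fun t : ℝ ↦ (t:ℂ) ^ (s - 1)) (Ioi 0) := by
  apply ContinuousOn.cpow_const (Complex.continuous_ofReal.continuousOn)
  intro t ht
  exact Or.inl (by simpa using (ht : (0:ℝ) < t))

private lemma lsf_integrableOn_cpow_mul_exp {s a : ℂ} (hs : 0 < s.re) (ha : 0 < a.re) :
    IntegrableOn (fun t : ℝ ↦ (t:ℂ) ^ (s - 1) * Complex.exp (-(a * t))) (Ioi 0) := by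
  apply Integrable.mono' (lsf_integrableOn_rpow_mul_exp hs ha)
  · exact (lsf_continuousOn_cpow.mul
      ((Complex.continuous_exp.comp (by fun_prop)).continuousOn)).aestronglyMeasurable
        measurableSet_Ioi
  · filter_upwards [ae_restrict_mem measurableSet_Ioi] with t ht
    rw [lsf_norm_cpow_mul_exp ht]

private lemma lsf_differentiableAt_integral {s : ℂ} (hs : 0 < s.re) {a : ℂ} (ha : 0 < a.re) :
    DifferentiableAt ℂ
      (fun w : ℂ ↦ ∫ t : ℝ in Ioi 0, (t:ℂ) ^ (s - 1) * Complex.exp (-(w * t))) a := by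
  set F : ℂ → ℝ → ℂ := fun w t ↦ (t:ℂ) ^ (s - 1) * Complex.exp (-(w * t)) with hF
  set F' : ℂ → ℝ → ℂ := fun w t ↦ (t:ℂ) ^ (s - 1) * (-(t:ℂ) * Complex.exp (-(w * t))) with hF'
  have hmeas : ∀ w : ℂ, AEStronglyMeasurable (F w) (volume.restrict (Ioi 0)) := fun w ↦
    (lsf_continuousOn_cpow.mul
      ((Complex.continuous_exp.comp (by fun_prop)).continuousOn)).aestronglyMeasurable
      measurableSet_Ioi
  have hmeas' : AEStronglyMeasurable (F' a) (volume.restrict (Ioi 0)) := by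
    apply ContinuousOn.aestronglyMeasurable _ measurableSet_Ioi
    exact lsf_continuousOn_cpow.mul
      (((Complex.continuous_ofReal.neg).mul
        (Complex.continuous_exp.comp (by fun_prop))).continuousOn)
  have hb : IntegrableOn (fun t : ℝ ↦ t ^ ((s.re + 1) - 1) * rexp (-(a.re / 2 * t)))
      (Ioi 0) := lsf_integrableOn_rpow_mul_exp (by linarith) (by linarith)
  have key := hasDerivAt_integral_of_dominated_loc_of_deriv_le (μ := volume.restrict (Ioi 0))
    (F := F) (F' := F') (x₀ := a)
    (bound := fun t : ℝ ↦ t ^ ((s.re + 1) - 1) * rexp (-(a.re / 2 * t)))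
    (Metric.ball_mem_nhds a (half_pos ha)) (Filter.Eventually.of_forall hmeas)
    (lsf_integrableOn_cpow_mul_exp hs ha) hmeas' ?_ hb ?_
  · exact key.2.differentiableAt
  · filter_upwards [ae_restrict_mem measurableSet_Ioi] with t ht x hx
    have ht0 : (0:ℝ) < t := ht
    have hxre : a.re / 2 ≤ x.re := by
      have h1 := Complex.abs_re_le_norm (x - a)
      simp only [Complex.sub_re] at h1
      have hlt : ‖x - a‖ < a.re / 2 := by
        simpa [Complex.dist_eq] using (Metric.mem_ball.mp hx)
      have h3 := abs_lt.mp (lt_of_le_of_lt h1 hlt)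
      linarith [h3.1]
    have hre2 : (-(x * (t:ℂ))).re = -(x.re * t) := by simp [Complex.mul_re]
    have : ‖F' x t‖ = t ^ (s.re - 1) * (t * rexp (-(x.re * t))) := by
      rw [hF']
      simp only [norm_mul, norm_neg, Complex.norm_real, Real.norm_eq_abs,
        Complex.norm_exp, Complex.norm_cpow_eq_rpow_re_of_pos ht0, hre2, Complex.sub_re,
        Complex.one_re]
      rw [abs_of_pos ht0]
    rw [this]
    have h1 : t ^ ((s.re + 1) - 1) = t ^ (s.re - 1) * t := by
      rw [show (s.re + 1) - 1 = (s.re - 1) + 1 by ring, Real.rpow_add ht0, Real.rpow_one]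
    rw [h1, mul_assoc]
    have hexp : rexp (-(x.re * t)) ≤ rexp (-(a.re / 2 * t)) := by
      rw [Real.exp_le_exp]; nlinarith
    have h0 : (0:ℝ) ≤ t ^ (s.re - 1) := by positivity
    exact mul_le_mul_of_nonneg_left (mul_le_mul_of_nonneg_left hexp ht0.le) h0
  · filter_upwards [ae_restrict_mem measurableSet_Ioi] with t ht x _
    have : HasDerivAt (fun w : ℂ ↦ Complex.exp (-(w * t))) (-(t:ℂ) * Complex.exp (-(x * t))) x := by
      have h0 : HasDerivAt (fun w : ℂ ↦ -(w * (t:ℂ))) (-(t:ℂ)) x := by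
        exact (((hasDerivAt_id x).mul_const (t:ℂ)).neg).congr_deriv (by simp)
      simpa [mul_comm] using h0.cexp
    simpa [hF', hF] using this.const_mul ((t:ℂ) ^ (s - 1))

private lemma lsf_gamma_integral {s : ℂ} (hs : 0 < s.re) {a : ℂ} (ha : 0 < a.re) :
    ∫ t : ℝ in Ioi 0, (t:ℂ) ^ (s - 1) * Complex.exp (-(a * t)) = Complex.Gamma s * a ^ (-s) := by
  set U : Set ℂ := {w : ℂ | 0 < w.re} with hU
  have hUopen : IsOpen U := isOpen_lt continuous_const Complex.continuous_re
  have hUconn : IsPreconnected U := (convex_halfSpace_re_gt 0).isPreconnected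
  set F : ℂ → ℂ := fun w ↦ ∫ t : ℝ in Ioi 0, (t:ℂ) ^ (s - 1) * Complex.exp (-(w * t)) with hF
  set G : ℂ → ℂ := fun w ↦ Complex.Gamma s * w ^ (-s) with hG
  have hFa : AnalyticOnNhd ℂ F U := by
    apply DifferentiableOn.analyticOnNhd _ hUopen
    exact fun w hw ↦ (lsf_differentiableAt_integral hs hw).differentiableWithinAt
  have hGa : AnalyticOnNhd ℂ G U := by
    apply DifferentiableOn.analyticOnNhd _ hUopen
    intro w hw
    exact (((differentiableAt_id.cpow (differentiableAt_const (-s))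
      (Or.inl hw)).const_mul (Complex.Gamma s))).differentiableWithinAt
  have h1U : (1:ℂ) ∈ U := by simp [hU]
  have heq : ∀ r : ℝ, 0 < r → F (r:ℂ) = G (r:ℂ) := by
    intro r hr
    have h2 : F (r:ℂ) = (1 / (r:ℂ)) ^ s * Complex.Gamma s :=
      Complex.integral_cpow_mul_exp_neg_mul_Ioi hs hr
    rw [h2, hG]
    show (1 / (r:ℂ)) ^ s * Complex.Gamma s = Complex.Gamma s * (r:ℂ) ^ (-s)
    have harg : ((r:ℂ)).arg ≠ π := by
      rw [Complex.arg_ofReal_of_nonneg hr.le]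
      exact fun h ↦ Real.pi_ne_zero h.symm
    rw [Complex.cpow_neg, one_div, Complex.inv_cpow _ _ harg, mul_comm]
  have hfreq : ∃ᶠ w in nhdsWithin (1:ℂ) {(1:ℂ)}ᶜ, F w = G w := by
    have htend : Tendsto (fun n : ℕ ↦ ((1 + (n+1:ℝ)⁻¹ : ℝ) : ℂ)) atTop
        (nhdsWithin (1:ℂ) {(1:ℂ)}ᶜ) := by
      rw [tendsto_nhdsWithin_iff]
      constructor
      · have : Tendsto (fun n : ℕ ↦ (1 + (n+1:ℝ)⁻¹ : ℝ)) atTop (nhds 1) := by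
          have := tendsto_one_div_add_atTop_nhds_zero_nat (𝕜 := ℝ)
          simp only [one_div] at this
          simpa using tendsto_const_nhds.add this
        have h5 := (Complex.continuous_ofReal.tendsto 1).comp this
        simpa only [Function.comp_def, Complex.ofReal_one] using h5
      · apply Filter.Eventually.of_forall
        intro n
        simp only [mem_compl_iff, mem_singleton_iff]
        intro h
        have : (1 + (n+1:ℝ)⁻¹ : ℝ) = 1 := by exact_mod_cast h
        nlinarith [inv_pos.mpr (by positivity : (0:ℝ) < (n:ℝ)+1), this]
    exact htend.frequently (Filter.Frequently.of_forall fun n ↦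
      heq _ (by positivity))
  have := hFa.eqOn_of_preconnected_of_frequently_eq hGa hUconn h1U hfreq
  exact this ha

private noncomputable def lsfH (s z : ℂ) : ℝ → ℂ :=
  Set.indicator (Ioi 0) (fun t : ℝ ↦ (t:ℂ) ^ (s - 1) * Complex.exp (2 * π * Complex.I * z * t))

private noncomputable def lsfC (s : ℂ) : ℂ :=
  Complex.Gamma s * (2 * (π:ℂ)) ^ (-s) * Complex.exp (Complex.I * π * s / 2)

private noncomputable def lsfG (s z : ℂ) : ℝ → ℂ := fun x : ℝ ↦ lsfC s * (z - x) ^ (-s)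

section main
variable {s z : ℂ}

private lemma lsf_cpow_split {w : ℂ} (hw : 0 < w.im) (s : ℂ) :
    (((2 * π : ℝ) : ℂ) * (-Complex.I * w)) ^ (-s)
      = (2 * (π:ℂ)) ^ (-s) * Complex.exp (Complex.I * π * s / 2) * w ^ (-s) := by
  have hw0 : w ≠ 0 := fun h ↦ by simp [h] at hw
  have harg1 : 0 < w.arg := by
    rcases lt_or_eq_of_le (Complex.arg_nonneg_iff.mpr hw.le) with h | h
    · exact h
    · exfalso
      have := Complex.arg_eq_zero_iff.mp h.symm
      exact hw.ne' this.2
  have harg2 : w.arg ≤ π := Complex.arg_le_pi w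
  have hx0 : ((2 * π : ℝ) : ℂ) ≠ 0 := by
    simp only [ne_eq, Complex.ofReal_eq_zero]
    positivity
  have hy0 : -Complex.I * w ≠ 0 := mul_ne_zero (by simp) hw0
  have step1 : (((2 * π : ℝ) : ℂ) * (-Complex.I * w)) ^ (-s)
      = ((2 * π : ℝ) : ℂ) ^ (-s) * (-Complex.I * w) ^ (-s) := by
    apply lsf_mul_cpow hx0 hy0 _ (-s)
    rw [Complex.arg_ofReal_of_nonneg (by positivity), zero_add]
    exact Complex.arg_mem_Ioc _
  have step2 : (-Complex.I * w) ^ (-s) = (-Complex.I) ^ (-s) * w ^ (-s) := by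
    apply lsf_mul_cpow (by simp) hw0 _ (-s)
    rw [Complex.arg_neg_I]
    constructor <;> [linarith [Real.pi_pos]; linarith [Real.pi_pos]]
  have step3 : (-Complex.I) ^ (-s) = Complex.exp (Complex.I * π * s / 2) := by
    rw [Complex.cpow_def_of_ne_zero (by simp) (-s), Complex.log_neg_I]
    congr 1
    ring
  have step4 : (((2 * π : ℝ)) : ℂ) ^ (-s) = (2 * (π:ℂ)) ^ (-s) := by
    push_cast
    rfl
  rw [step1, step2, step3, step4]
  ring

private lemma lsf_fourier_H (hs : 1 < s.re) (hz : 0 < z.im) (ξ : ℝ) :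
    FourierTransform.fourier (lsfH s z) ξ = lsfG s z ξ := by
  have hσ : 0 < s.re := by linarith
  set a : ℂ := 2 * (π:ℝ) * Complex.I * ((ξ:ℂ) - z) with ha
  have hare : 0 < a.re := by
    have : a.re = 2 * π * z.im := by
      simp [ha, Complex.mul_re, Complex.mul_im, Complex.sub_im, Complex.sub_re]
    rw [this]; positivity
  have key : ∀ v : ℝ, Complex.exp (((-2 * π * v * ξ : ℝ) : ℂ) * Complex.I) • lsfH s z v
      = Set.indicator (Ioi 0) (fun v : ℝ ↦ (v:ℂ) ^ (s - 1) * Complex.exp (-(a * v))) v := by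
    intro v
    rw [lsfH]
    by_cases hv : v ∈ Ioi 0
    · rw [Set.indicator_of_mem hv, Set.indicator_of_mem hv, smul_eq_mul]
      rw [show Complex.exp (((-2 * π * v * ξ : ℝ):ℂ) * Complex.I) *
            ((v:ℂ) ^ (s - 1) * Complex.exp (2 * π * Complex.I * z * v))
          = (v:ℂ) ^ (s - 1) * (Complex.exp (((-2 * π * v * ξ : ℝ):ℂ) * Complex.I) *
            Complex.exp (2 * π * Complex.I * z * v)) by ring, ← Complex.exp_add]
      congr 2
      push_cast [ha]
      ring
    · rw [Set.indicator_of_notMem hv, Set.indicator_of_notMem hv, smul_zero]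
  rw [Real.fourier_real_eq_integral_exp_smul]
  simp_rw [key]
  rw [MeasureTheory.integral_indicator measurableSet_Ioi, lsf_gamma_integral hσ hare]
  have haw : a = ((2 * π : ℝ) : ℂ) * (-Complex.I * (z - (ξ:ℂ))) := by
    rw [ha]; push_cast; ring
  rw [haw, lsf_cpow_split (by simp [Complex.sub_im, hz] : 0 < (z - (ξ:ℂ)).im) s, lsfG, lsfC]
  ring

end main

private lemma lsf_norm_H_eq (hz : 0 < z.im) {t : ℝ} (ht : 0 < t) :
    ‖lsfH s z t‖ = t ^ (s.re - 1) * rexp (-(2 * π * z.im) * t) := by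
  rw [lsfH, Set.indicator_of_mem (by exact ht : t ∈ Ioi 0), norm_mul,
    Complex.norm_exp, Complex.norm_cpow_eq_rpow_re_of_pos ht]
  have h1 : (s - 1).re = s.re - 1 := by simp
  have h2 : (2 * (π:ℂ) * Complex.I * z * (t:ℂ)).re = -(2 * π * z.im) * t := by
    simp [Complex.mul_re, Complex.mul_im]
  rw [h1, h2]

private lemma lsf_norm_H_le (hs : 1 < s.re) (hz : 0 < z.im) (t : ℝ) :
    ‖lsfH s z t‖ ≤ |t| ^ (s.re - 1) := by
  rcases le_or_gt t 0 with ht | ht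
  · rw [lsfH, Set.indicator_of_notMem (by simpa using ht), norm_zero]
    positivity
  · rw [lsf_norm_H_eq hz ht, abs_of_pos ht]
    have hexp : rexp (-(2 * π * z.im) * t) ≤ 1 :=
      Real.exp_le_one_iff.mpr (by nlinarith [ht.le, hz.le, Real.pi_pos, mul_pos (mul_pos two_pos Real.pi_pos) hz])
    have h0 : (0:ℝ) ≤ t ^ (s.re - 1) := by positivity
    nlinarith [mul_le_mul_of_nonneg_left hexp h0]

private lemma lsf_continuous_H (hs : 1 < s.re) (hz : 0 < z.im) : Continuous (lsfH s z) := by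
  rw [continuous_iff_continuousAt]
  intro t₀
  rcases lt_trichotomy t₀ 0 with ht | ht | ht
  · have hev : ∀ᶠ t in nhds t₀, lsfH s z t = 0 := by
      filter_upwards [eventually_lt_nhds ht] with t htlt
      rw [lsfH, Set.indicator_of_notMem (by simpa using htlt.le)]
    exact (continuousAt_congr (hev : lsfH s z =ᶠ[nhds t₀] fun _ ↦ (0:ℂ))).mpr continuousAt_const
  · subst ht
    have h0 : lsfH s z 0 = 0 := by
      rw [lsfH, Set.indicator_of_notMem (by simp)]
    rw [ContinuousAt, h0]
    apply squeeze_zero_norm (lsf_norm_H_le hs hz)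
    have hcont : ContinuousAt (fun t : ℝ ↦ |t| ^ (s.re - 1)) 0 :=
      (Continuous.rpow_const (_root_.continuous_abs) (fun _ ↦ Or.inr (by linarith))).continuousAt
    have : (|(0:ℝ)| ^ (s.re - 1)) = 0 := by
      rw [abs_zero, Real.zero_rpow (by linarith)]
    rw [ContinuousAt, this] at hcont
    exact hcont
  · have hev : ∀ᶠ t in nhds t₀, lsfH s z t
        = (t:ℂ) ^ (s - 1) * Complex.exp (2 * π * Complex.I * z * t) := by
      filter_upwards [eventually_gt_nhds ht] with t htgt
      rw [lsfH, Set.indicator_of_mem (by exact htgt : t ∈ Ioi 0)]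
    rw [continuousAt_congr hev]
    apply ContinuousAt.mul
    · exact (Complex.continuousAt_ofReal_cpow_const _ _ (Or.inr ht.ne'))
    · exact (Complex.continuous_exp.comp (by fun_prop)).continuousAt

private lemma lsf_integrable_H (hs : 1 < s.re) (hz : 0 < z.im) : Integrable (lsfH s z) := by
  rw [lsfH, integrable_indicator_iff measurableSet_Ioi]
  have ha : 0 < (-(2 * (π:ℝ) * Complex.I * z)).re := by
    have : (-(2 * (π:ℝ) * Complex.I * z)).re = 2 * π * z.im := by
      simp [Complex.mul_re, Complex.mul_im]
    rw [this]; positivity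
  refine (lsf_integrableOn_cpow_mul_exp (by linarith : 0 < s.re) ha).congr_fun
    (fun t ht ↦ ?_) measurableSet_Ioi
  congr 1
  congr 1
  ring

private lemma lsf_G_bound (hs : 1 < s.re) (hz : 0 < z.im) :
    ∃ K : ℝ, ∀ x : ℝ, ‖lsfG s z x‖ ≤ K * (1 + |x|) ^ (-s.re) := by
  set B : ℝ := 1 + (1 + ‖z‖) / z.im with hB
  have hB0 : 0 < B := by
    rw [hB]
    have : 0 ≤ (1 + ‖z‖) / z.im := by positivity
    linarith
  refine ⟨‖lsfC s‖ * rexp (π * |s.im|) * B ^ s.re, fun x ↦ ?_⟩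
  have hzx0 : z - (x:ℂ) ≠ 0 := by
    intro h
    have := congrArg Complex.im h
    simp [Complex.sub_im] at this
    exact hz.ne' this
  have habs : ‖z - x‖ ≠ 0 := norm_ne_zero_iff.mpr hzx0
  -- key distance bound
  have e1 : z.im ≤ ‖z - x‖ := by
    have := Complex.abs_im_le_norm (z - (x:ℂ))
    rwa [Complex.sub_im, Complex.ofReal_im, sub_zero, abs_of_pos hz] at this
  have e2 : |x| ≤ ‖z‖ + ‖z - x‖ := by
    have h3 := norm_sub_le z (z - (x:ℂ))
    rw [sub_sub_cancel] at h3
    simpa [Complex.norm_real] using h3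
  have hkey : 1 + |x| ≤ B * ‖z - x‖ := by
    have hD : 1 + ‖z‖ = ((1 + ‖z‖) / z.im) * z.im := by
      field_simp
    have hD0 : 0 ≤ (1 + ‖z‖) / z.im := by positivity
    rw [hB]
    nlinarith [mul_le_mul_of_nonneg_left e1 hD0]
  -- norm of the cpow
  have hnorm : ‖(z - (x:ℂ)) ^ (-s)‖
      = ‖z - x‖ ^ (-s.re) * rexp ((z - (x:ℂ)).arg * s.im) := by
    rw [Complex.norm_cpow_of_ne_zero hzx0]
    rw [show (-s).re = -s.re by simp, show (-s).im = -s.im by simp]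
    rw [show (z - (x:ℂ)).arg * (-s.im) = -((z - (x:ℂ)).arg * s.im) by ring, Real.exp_neg]
    rw [div_eq_mul_inv, inv_inv]
  have hexp : rexp ((z - (x:ℂ)).arg * s.im) ≤ rexp (π * |s.im|) := by
    rw [Real.exp_le_exp]
    calc (z - (x:ℂ)).arg * s.im ≤ |(z - (x:ℂ)).arg * s.im| := le_abs_self _
    _ = |(z - (x:ℂ)).arg| * |s.im| := abs_mul _ _
    _ ≤ π * |s.im| := by
        have := Complex.abs_arg_le_pi (z - (x:ℂ))
        gcongr
  have hrpow : ‖z - x‖ ^ (-s.re) ≤ B ^ s.re * (1 + |x|) ^ (-s.re) := by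
    have h1 : 0 < B⁻¹ * (1 + |x|) := by positivity
    have h2 : B⁻¹ * (1 + |x|) ≤ ‖z - x‖ := by
      rw [inv_mul_le_iff₀ hB0]
      linarith [hkey]
    calc ‖z - x‖ ^ (-s.re) ≤ (B⁻¹ * (1 + |x|)) ^ (-s.re) :=
          Real.rpow_le_rpow_of_nonpos h1 h2 (by linarith)
    _ = B ^ s.re * (1 + |x|) ^ (-s.re) := by
        rw [Real.mul_rpow (by positivity) (by positivity), Real.inv_rpow hB0.le,
          Real.rpow_neg hB0.le, inv_inv]
  calc ‖lsfG s z x‖ = ‖lsfC s‖ * ‖(z - (x:ℂ)) ^ (-s)‖ := by rw [lsfG, norm_mul]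
  _ = ‖lsfC s‖ * (‖z - x‖ ^ (-s.re) * rexp ((z - (x:ℂ)).arg * s.im)) := by
      rw [hnorm]
  _ ≤ ‖lsfC s‖ * ((B ^ s.re * (1 + |x|) ^ (-s.re)) * rexp (π * |s.im|)) := by
      gcongr
  _ = ‖lsfC s‖ * rexp (π * |s.im|) * B ^ s.re * (1 + |x|) ^ (-s.re) := by ring

private lemma lsf_continuous_G (hz : 0 < z.im) : Continuous (lsfG s z) := by
  apply Continuous.mul continuous_const
  apply Continuous.cpow (continuous_const.sub Complex.continuous_ofReal) continuous_const
  intro x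
  exact Or.inr (by simp [Complex.sub_im]; exact hz.ne')

private lemma lsf_integrable_G (hs : 1 < s.re) (hz : 0 < z.im) : Integrable (lsfG s z) := by
  obtain ⟨K, hK⟩ := lsf_G_bound hs hz
  have hint : Integrable (fun x : ℝ ↦ K * (1 + ‖x‖) ^ (-s.re)) :=
    (integrable_one_add_norm (by simpa using hs)).const_mul K
  exact hint.mono' ((lsf_continuous_G hz).aestronglyMeasurable)
    (Filter.Eventually.of_forall fun x ↦ by simpa using hK x)

private lemma lsf_fourier_G (hs : 1 < s.re) (hz : 0 < z.im) (ξ : ℝ) :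
    FourierTransform.fourier (lsfG s z) ξ = lsfH s z (-ξ) := by
  have hfun : FourierTransform.fourier (lsfH s z) = lsfG s z := funext (lsf_fourier_H hs hz)
  have hinv := MeasureTheory.Integrable.fourierInv_fourier_eq (lsf_integrable_H hs hz)
    (hfun ▸ lsf_integrable_G hs hz) ((lsf_continuous_H hs hz).continuousAt (x := -ξ))
  rw [Real.fourierInv_eq_fourier_neg, hfun, neg_neg] at hinv
  exact hinv

private lemma lsf_bigO (hs : 1 < s.re) (hz : 0 < z.im) :
    lsfG s z =O[Filter.cocompact ℝ] fun x : ℝ ↦ |x| ^ (-s.re) := by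
  obtain ⟨K, hK⟩ := lsf_G_bound hs hz
  have hev : ∀ᶠ x : ℝ in Filter.cocompact ℝ, 1 ≤ |x| := by
    rw [cocompact_eq_atBot_atTop]
    refine Filter.eventually_sup.mpr ⟨?_, ?_⟩
    · exact Filter.eventually_atBot.mpr ⟨-1, fun x hx ↦ by
        rw [_root_.abs_of_nonpos (by linarith)]; linarith⟩
    · exact Filter.eventually_atTop.mpr ⟨1, fun x hx ↦ by
        rw [_root_.abs_of_nonneg (by linarith)]; exact hx⟩
  rw [Asymptotics.isBigO_iff]
  refine ⟨K, ?_⟩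
  filter_upwards [hev] with x hx
  have h1 : (1 + |x|) ^ (-s.re) ≤ |x| ^ (-s.re) :=
    Real.rpow_le_rpow_of_nonpos (by linarith) (by linarith) (by linarith)
  have hK0 : 0 ≤ K := by
    have h0 := hK 0
    simp only [abs_zero, add_zero, Real.one_rpow] at h0
    exact le_trans (norm_nonneg _) (by linarith)
  rw [Real.norm_eq_abs, _root_.abs_of_nonneg (Real.rpow_nonneg (abs_nonneg x) _)]
  calc ‖lsfG s z x‖ ≤ K * (1 + |x|) ^ (-s.re) := hK x
  _ ≤ K * |x| ^ (-s.re) := by gcongr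

private lemma lsf_summable_nat (hs : 1 < s.re) (hz : 0 < z.im) :
    Summable fun k : ℕ ↦ lsfH s z ((k:ℝ) + 1) := by
  set r : ℝ := rexp (-(2 * π * z.im)) with hrdef
  have hr0 : 0 ≤ r := Real.exp_nonneg _
  have hr1 : r < 1 := by
    rw [hrdef, Real.exp_lt_one_iff]
    nlinarith [Real.pi_pos, hz]
  set m : ℕ := ⌈s.re⌉₊ with hm
  have hmaj : Summable fun k : ℕ ↦ (((k:ℝ) + 1)) ^ m * r ^ (k + 1) := by
    have h0 : Summable fun n : ℕ ↦ (n:ℝ) ^ m * r ^ n :=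
      summable_pow_mul_geometric_of_norm_lt_one m
        (by rwa [Real.norm_eq_abs, _root_.abs_of_nonneg hr0])
    have h1 := h0.comp_injective Nat.succ_injective
    refine h1.congr fun k ↦ ?_
    show ((((k+1):ℕ)):ℝ) ^ m * r ^ ((k+1):ℕ) = (((k:ℝ)) + 1) ^ m * r ^ (k + 1)
    push_cast
    ring
  apply Summable.of_norm_bounded hmaj
  intro k
  have hk1 : (0:ℝ) < (k:ℝ) + 1 := by positivity
  rw [lsf_norm_H_eq hz hk1]
  have e1 : rexp (-(2 * π * z.im) * ((k:ℝ) + 1)) = r ^ (k + 1) := by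
    rw [hrdef, ← Real.exp_nat_mul]
    congr 1
    push_cast
    ring
  have e2 : ((k:ℝ) + 1) ^ (s.re - 1) ≤ ((k:ℝ) + 1) ^ (m:ℝ) := by
    have hk0 : (0:ℝ) ≤ (k:ℝ) := Nat.cast_nonneg k
    apply Real.rpow_le_rpow_of_exponent_le (by linarith)
    have := Nat.le_ceil s.re
    linarith
  rw [e1]
  have e3 : ((k:ℝ) + 1) ^ ((m:ℕ):ℝ) = ((k:ℝ) + 1) ^ m := Real.rpow_natCast _ m
  have hrpow : (0:ℝ) ≤ r ^ (k+1) := pow_nonneg hr0 _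
  calc ((k:ℝ) + 1) ^ (s.re - 1) * r ^ (k + 1)
      ≤ ((k:ℝ) + 1) ^ ((m:ℕ):ℝ) * r ^ (k + 1) := by
        exact mul_le_mul_of_nonneg_right e2 hrpow
  _ = ((k:ℝ) + 1) ^ m * r ^ (k + 1) := by rw [e3]

private lemma lsf_support_subset (hs : 1 < s.re) (hz : 0 < z.im) :
    (Function.support fun n : ℤ ↦ lsfH s z (-(n:ℝ))) ⊆
      Set.range (fun k : ℕ ↦ -((k:ℤ) + 1)) := by
  intro n hn
  have hneg : (n:ℝ) < 0 := by
    by_contra hcon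
    push_neg at hcon
    apply hn
    show lsfH s z (-(n:ℝ)) = 0
    rw [lsfH, Set.indicator_of_notMem (by simp only [mem_Ioi, not_lt]; linarith)]
  have hnn : n < 0 := by exact_mod_cast hneg
  refine ⟨(-n - 1).toNat, ?_⟩
  show -((((-n - 1).toNat : ℤ)) + 1) = n
  omega

private lemma lsf_summand_eq (hs : 1 < s.re) (hz : 0 < z.im) (k : ℕ) :
    lsfH s z ((k:ℝ) + 1)
      = ((k:ℂ) + 1) ^ (s - 1) * Complex.exp (2 * π * Complex.I * ((k:ℂ) + 1) * z) := by
  rw [lsfH, Set.indicator_of_mem (mem_Ioi.mpr (by positivity) : ((k:ℝ) + 1) ∈ Ioi 0)]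
  rw [show ((((k:ℝ) + 1) : ℝ) : ℂ) = ((k:ℂ) + 1) by push_cast; rfl]
  congr 1
  ring

theorem lipschitz_summation_formula (s : ℂ) (hs : 1 < s.re) (z : ℂ) (hz : 0 < z.im) :
    ∑' n : ℕ, ((n : ℂ) + 1) ^ (s - 1) * Complex.exp (2 * π * Complex.I * ((n : ℂ) + 1) * z)
      = Complex.Gamma s * (2 * π : ℂ) ^ (-s) * Complex.exp (Complex.I * π * s / 2) *
          ∑' n : ℤ, ((z + (n : ℂ)) ^ s)⁻¹ := by
  have hi : Function.Injective (fun k : ℕ ↦ -((k:ℤ) + 1)) := fun a b h ↦ by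
    have h' : -((a:ℤ) + 1) = -((b:ℤ) + 1) := h
    omega
  have hsummable : Summable fun n : ℤ ↦ FourierTransform.fourier (lsfG s z) n := by
    have h1 : (fun n : ℤ ↦ FourierTransform.fourier (lsfG s z) n)
        = fun n : ℤ ↦ lsfH s z (-(n:ℝ)) := funext fun n ↦ lsf_fourier_G hs hz n
    rw [h1]
    rw [← hi.summable_iff (Function.support_subset_iff'.mp (lsf_support_subset hs hz))]
    refine (lsf_summable_nat hs hz).congr fun k ↦ ?_
    show lsfH s z ((k:ℝ) + 1) = lsfH s z (-(((-((k:ℤ) + 1)):ℤ):ℝ))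
    congr 1
    push_cast
    ring
  have hP := Real.tsum_eq_tsum_fourier_of_rpow_decay_of_summable
    (lsf_continuous_G hz) hs (lsf_bigO hs hz) hsummable 0
  -- simplify the fourier factor
  have hfour : ∀ n : ℤ, (fourier n) ((0:ℝ) : UnitAddCircle) = 1 := fun n ↦ by
    rw [fourier_coe_apply]
    simp
  simp_rw [hfour, mul_one, zero_add] at hP
  -- chain of equalities
  have L1 : ∑' n : ℕ, ((n : ℂ) + 1) ^ (s - 1)
        * Complex.exp (2 * π * Complex.I * ((n : ℂ) + 1) * z)
      = ∑' k : ℕ, lsfH s z ((k:ℝ) + 1) :=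
    tsum_congr fun k ↦ (lsf_summand_eq hs hz k).symm
  have L2 : ∑' k : ℕ, lsfH s z ((k:ℝ) + 1) = ∑' n : ℤ, lsfH s z (-(n:ℝ)) := by
    have := hi.tsum_eq (f := fun n : ℤ ↦ lsfH s z (-(n:ℝ))) (lsf_support_subset hs hz)
    rw [← this]
    refine tsum_congr fun k ↦ ?_
    show lsfH s z ((k:ℝ) + 1) = lsfH s z (-(((-((k:ℤ) + 1)):ℤ):ℝ))
    congr 1
    push_cast
    ring
  have L3 : ∑' n : ℤ, lsfH s z (-(n:ℝ)) = ∑' n : ℤ, FourierTransform.fourier (lsfG s z) n :=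
    tsum_congr fun n ↦ (lsf_fourier_G hs hz n).symm
  have L5 : ∑' n : ℤ, lsfG s z (n:ℝ) = ∑' n : ℤ, lsfC s * (z + (n:ℂ)) ^ (-s) := by
    rw [← (Equiv.neg ℤ).tsum_eq (fun n : ℤ ↦ lsfC s * (z + (n:ℂ)) ^ (-s))]
    refine tsum_congr fun n ↦ ?_
    show lsfG s z (n:ℝ) = lsfC s * (z + ((-n:ℤ):ℂ)) ^ (-s)
    rw [lsfG]
    congr 2
    push_cast
    ring
  rw [L1, L2, L3, ← hP, L5, tsum_mul_left]
  rw [lsfC]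
  congr 1
  refine tsum_congr fun n ↦ ?_
  rw [Complex.cpow_neg]
end

section
/- For real a > 0 and real t with t ≤ a − 1/3, one has ∫_t^∞ x^{a−1} e^{−x} dx > (1/2)·Γ(a). -/
open Real MeasureTheory

/-- Key single-variable inequality: `artanh`-type lower bound. -/
lemma log_ratio_lower {v : ℝ} (h0 : 0 < v) (h1 : v < 1) :
    2 * v + 2 / 3 * v ^ 3 < Real.log (1 + v) - Real.log (1 - v) := by
  set F : ℝ → ℝ := fun x => Real.log (1 + x) - Real.log (1 - x) - 2 * x - 2 / 3 * x ^ 3 with hF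
  have hder : ∀ x ∈ Set.Ioo (0 : ℝ) 1,
      HasDerivAt F (1 / (1 + x) + 1 / (1 - x) - 2 - 2 * x ^ 2) x := by
    intro x hx
    have hx1 : (1 : ℝ) + x ≠ 0 := by nlinarith [hx.1]
    have hx2 : (1 : ℝ) - x ≠ 0 := by nlinarith [hx.2]
    have d1 : HasDerivAt (fun y : ℝ => Real.log (1 + y)) (1 / (1 + x)) x := by
      simpa using (((hasDerivAt_id x).const_add 1).log hx1)
    have d2 : HasDerivAt (fun y : ℝ => Real.log (1 - y)) (-1 / (1 - x)) x := by
      simpa using (((hasDerivAt_id x).const_sub 1).log hx2)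
    have d3 : HasDerivAt (fun y : ℝ => 2 * y) 2 x := by
      simpa using (hasDerivAt_id x).const_mul 2
    have d4 : HasDerivAt (fun y : ℝ => 2 / 3 * y ^ 3) (2 / 3 * (3 * x ^ 2)) x := by
      simpa using (hasDerivAt_pow 3 x).const_mul (2 / 3 : ℝ)
    have := ((d1.sub d2).sub d3).sub d4
    exact this.congr_deriv (by ring)
  have hcont : ContinuousOn F (Set.Ico (0 : ℝ) 1) := by
    have c1 : ContinuousOn (fun y : ℝ => Real.log (1 + y)) (Set.Ico (0 : ℝ) 1) := by
      apply (continuous_const.add continuous_id').continuousOn.log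
      intro x hx; show (1:ℝ) + x ≠ 0; nlinarith [hx.1]
    have c2 : ContinuousOn (fun y : ℝ => Real.log (1 - y)) (Set.Ico (0 : ℝ) 1) := by
      apply (continuous_const.sub continuous_id').continuousOn.log
      intro x hx; show (1:ℝ) - x ≠ 0; nlinarith [hx.2]
    exact ((c1.sub c2).sub (continuous_const.mul continuous_id).continuousOn).sub
      ((continuous_const.mul (continuous_pow 3)).continuousOn)
  have hmono : StrictMonoOn F (Set.Ico (0 : ℝ) 1) := by
    apply strictMonoOn_of_deriv_pos (convex_Ico 0 1) hcont
    intro x hx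
    rw [interior_Ico] at hx
    rw [(hder x hx).deriv]
    have hx1 : (0 : ℝ) < 1 + x := by linarith [hx.1]
    have hx2 : (0 : ℝ) < 1 - x := by linarith [hx.2]
    have : 1 / (1 + x) + 1 / (1 - x) - 2 - 2 * x ^ 2
        = 2 * x ^ 4 / ((1 + x) * (1 - x)) := by
      field_simp
      ring
    rw [this]
    exact div_pos (by nlinarith [pow_pos hx.1 4]) (by nlinarith [hx.1, hx.2])
  have h := hmono (Set.mem_Ico.2 ⟨le_refl 0, one_pos⟩) (Set.mem_Ico.2 ⟨h0.le, h1⟩) h0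
  have hF0 : F 0 = 0 := by simp [hF]
  rw [hF0] at h
  simp only [hF] at h
  linarith

/-- Image of an interval of nonnegatives under the cube map. -/
lemma cube_image_Ioo {p q : ℝ} (hp : 0 ≤ p) :
    (fun y : ℝ => y ^ (3 : ℕ)) '' Set.Ioo p q = Set.Ioo (p ^ (3 : ℕ)) (q ^ (3 : ℕ)) := by
  ext x
  constructor
  · rintro ⟨y, ⟨h1, h2⟩, rfl⟩
    exact ⟨pow_lt_pow_left₀ h1 hp (by norm_num),
      pow_lt_pow_left₀ h2 (hp.trans h1.le) (by norm_num)⟩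
  · rintro ⟨h1, h2⟩
    have hx : 0 < x := lt_of_le_of_lt (pow_nonneg hp 3) h1
    have hq : 0 < q := by
      by_contra h
      push_neg at h
      have : q ^ (3 : ℕ) ≤ 0 := Odd.pow_nonpos (by decide) h
      linarith
    refine ⟨x ^ ((1 : ℝ) / 3), ⟨?_, ?_⟩, ?_⟩
    · calc p = (p ^ (3 : ℕ)) ^ ((1 : ℝ) / 3) := by
            rw [← Real.rpow_natCast p 3, ← Real.rpow_mul hp]; norm_num
        _ < x ^ ((1 : ℝ) / 3) := by
            apply Real.rpow_lt_rpow (pow_nonneg hp 3) h1 (by norm_num)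
    · calc x ^ ((1 : ℝ) / 3) < (q ^ (3 : ℕ)) ^ ((1 : ℝ) / 3) :=
            Real.rpow_lt_rpow hx.le h2 (by norm_num)
        _ = q := by rw [← Real.rpow_natCast q 3, ← Real.rpow_mul hq.le]; norm_num
    · show (x ^ ((1 : ℝ) / 3)) ^ (3 : ℕ) = x
      rw [← Real.rpow_natCast (x ^ ((1 : ℝ) / 3)) 3, ← Real.rpow_mul hx.le]
      norm_num

/-- Pointwise reflection inequality for the cube-root-transformed gamma density. -/
lemma key_pointwise (a μ y : ℝ) (hμ3 : μ ^ (3 : ℕ) = a - 1 / 3) (hy0 : 0 < y) (hyμ : y < μ) :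
    |3 * y ^ 2| * ((y ^ (3 : ℕ)) ^ (a - 1) * Real.exp (-(y ^ (3 : ℕ)))) <
      |3 * (2 * μ - y) ^ 2| * (((2 * μ - y) ^ (3 : ℕ)) ^ (a - 1)
        * Real.exp (-((2 * μ - y) ^ (3 : ℕ)))) := by
  have hμ0 : 0 < μ := hy0.trans hyμ
  set w : ℝ := 2 * μ - y with hw
  have hw0 : 0 < w := by simp [hw]; linarith
  have hwμ : μ < w := by simp [hw]; linarith
  -- rewrite both sides as 3 * exp( (3a-1) log z - z^3 )
  have hform : ∀ z : ℝ, 0 < z →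
      |3 * z ^ 2| * ((z ^ (3 : ℕ)) ^ (a - 1) * Real.exp (-(z ^ (3 : ℕ))))
        = 3 * Real.exp ((3 * a - 1) * Real.log z - z ^ (3 : ℕ)) := by
    intro z hz
    have h1 : |3 * z ^ 2| = 3 * z ^ 2 := abs_of_nonneg (by positivity)
    have h2 : (z ^ (3 : ℕ)) ^ (a - 1) = Real.exp ((a - 1) * (3 * Real.log z)) := by
      rw [Real.rpow_def_of_pos (pow_pos hz 3), Real.log_pow]
      congr 1
      push_cast
      ring
    have h3 : z ^ 2 = Real.exp (2 * Real.log z) := by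
      rw [← Real.exp_log (pow_pos hz 2), Real.log_pow]
      norm_num
    rw [h1, h2, h3, ← Real.exp_add, mul_assoc, ← Real.exp_add]
    congr 1
    ring
  rw [hform y hy0, hform w hw0]
  have hkey : (3 * a - 1) * Real.log y - y ^ (3 : ℕ)
      < (3 * a - 1) * Real.log w - w ^ (3 : ℕ) := by
    have h3a : 3 * a - 1 = 3 * μ ^ (3 : ℕ) := by rw [hμ3]; ring
    set v : ℝ := (μ - y) / μ with hv
    have hv0 : 0 < v := div_pos (by linarith) hμ0
    have hv1 : v < 1 := by
      rw [hv, div_lt_one hμ0]; linarith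
    have hlog := log_ratio_lower hv0 hv1
    have h1v : (1 : ℝ) + v = w / μ := by
      rw [hv, hw]; field_simp; ring
    have h2v : (1 : ℝ) - v = y / μ := by
      rw [hv]; field_simp; ring
    have hlw : Real.log (1 + v) = Real.log w - Real.log μ := by
      rw [h1v, Real.log_div hw0.ne' hμ0.ne']
    have hly : Real.log (1 - v) = Real.log y - Real.log μ := by
      rw [h2v, Real.log_div hy0.ne' hμ0.ne']
    rw [hlw, hly] at hlog
    -- multiply by 3 μ³ > 0
    have hmul : 3 * μ ^ (3 : ℕ) * (2 * v + 2 / 3 * v ^ 3)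
        < 3 * μ ^ (3 : ℕ) * (Real.log w - Real.log y) := by
      have := mul_lt_mul_of_pos_left (by linarith : 2 * v + 2 / 3 * v ^ 3
        < Real.log w - Real.log y) (by positivity : (0:ℝ) < 3 * μ ^ (3 : ℕ))
      linarith
    have hcube : w ^ (3 : ℕ) - y ^ (3 : ℕ) = 3 * μ ^ (3 : ℕ) * (2 * v + 2 / 3 * v ^ 3) := by
      rw [hv, hw]; field_simp; ring
    have hfin : w ^ (3 : ℕ) - y ^ (3 : ℕ)
        < 3 * μ ^ (3 : ℕ) * Real.log w - 3 * μ ^ (3 : ℕ) * Real.log y := by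
      calc w ^ (3 : ℕ) - y ^ (3 : ℕ) = 3 * μ ^ (3 : ℕ) * (2 * v + 2 / 3 * v ^ 3) := hcube
        _ < 3 * μ ^ (3 : ℕ) * (Real.log w - Real.log y) := hmul
        _ = 3 * μ ^ (3 : ℕ) * Real.log w - 3 * μ ^ (3 : ℕ) * Real.log y := by ring
    rw [h3a]
    linarith [hfin]
  have := Real.exp_lt_exp.2 hkey
  nlinarith [Real.exp_pos ((3 * a - 1) * Real.log y - y ^ (3 : ℕ)),
    Real.exp_pos ((3 * a - 1) * Real.log w - w ^ (3 : ℕ))]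

theorem gamma_tail_gt_half (a : ℝ) (ha : 0 < a) (t : ℝ) (ht : t ≤ a - 1 / 3) :
    Real.Gamma a / 2 < ∫ x in Set.Ioi t ∩ Set.Ioi 0, x ^ (a - 1) * Real.exp (-x) := by
  set f : ℝ → ℝ := fun x => x ^ (a - 1) * Real.exp (-x) with hf
  have hΓ : Real.Gamma a = ∫ x in Set.Ioi (0 : ℝ), f x := by
    rw [Real.Gamma_eq_integral ha]
    apply setIntegral_congr_fun measurableSet_Ioi
    intro x _
    simp [hf, mul_comm]
  have hΓpos : 0 < Real.Gamma a := Real.Gamma_pos_of_pos ha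
  have hfint : IntegrableOn f (Set.Ioi 0) := by
    apply (Real.GammaIntegral_convergent ha).congr_fun _ measurableSet_Ioi
    intro x _
    simp [hf, mul_comm]
  have hfnn : ∀ x ∈ Set.Ioi (0 : ℝ), 0 ≤ f x := by
    intro x hx
    have : (0:ℝ) < x := hx
    positivity
  rcases le_or_gt t 0 with h0 | h0
  · have hset : Set.Ioi t ∩ Set.Ioi 0 = Set.Ioi (0 : ℝ) :=
      Set.inter_eq_self_of_subset_right (Set.Ioi_subset_Ioi h0)
    rw [hset, ← hΓ]
    linarith
  · -- main case
    have hm : (0 : ℝ) < a - 1 / 3 := lt_of_lt_of_le h0 ht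
    set m : ℝ := a - 1 / 3 with hmdef
    set μ : ℝ := m ^ ((1 : ℝ) / 3) with hμdef
    have hμ0 : 0 < μ := Real.rpow_pos_of_pos hm _
    have hμ3 : μ ^ (3 : ℕ) = m := by
      rw [hμdef, ← Real.rpow_natCast (m ^ ((1:ℝ)/3)) 3, ← Real.rpow_mul hm.le]
      norm_num
    -- transformed density
    set H : ℝ → ℝ := fun y => |3 * y ^ 2| • f (y ^ (3 : ℕ)) with hH
    have hcube_deriv : ∀ (s : Set ℝ), ∀ x ∈ s,
        HasDerivWithinAt (fun y : ℝ => y ^ (3 : ℕ)) (3 * x ^ 2) s x := by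
      intro s x _
      have h := (hasDerivAt_pow 3 x).hasDerivWithinAt (s := s)
      norm_num at h
      exact h
    have hcube_inj : ∀ (p q : ℝ), 0 ≤ p → Set.InjOn (fun y : ℝ => y ^ (3 : ℕ)) (Set.Ioo p q) := by
      intro p q hp
      exact ((pow_left_strictMonoOn₀ (three_ne_zero)).injOn).mono
        (fun x hx => le_trans hp hx.1.le)
    have hrefl_deriv : ∀ x ∈ Set.Ioo (0 : ℝ) μ,
        HasDerivWithinAt (fun y : ℝ => 2 * μ - y) (-1 : ℝ) (Set.Ioo (0 : ℝ) μ) x := by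
      intro x _
      have h := ((hasDerivAt_id x).const_sub (2 * μ)).hasDerivWithinAt
        (s := Set.Ioo (0 : ℝ) μ)
      simpa using h
    have hrefl_inj : Set.InjOn (fun y : ℝ => 2 * μ - y) (Set.Ioo (0 : ℝ) μ) := by
      intro x _ y _ h
      simp only at h
      linarith
    have hrefl_img : (fun y : ℝ => 2 * μ - y) '' Set.Ioo (0 : ℝ) μ = Set.Ioo μ (2 * μ) := by
      rw [Set.image_const_sub_Ioo, show 2 * μ - μ = μ by ring, sub_zero]
    -- change of variables 1 : (0, m)
    have himg1 : (fun y : ℝ => y ^ (3 : ℕ)) '' Set.Ioo (0 : ℝ) μ = Set.Ioo 0 m := by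
      rw [cube_image_Ioo le_rfl, hμ3]
      norm_num
    have hchg1 : ∫ x in Set.Ioo (0 : ℝ) m, f x = ∫ y in Set.Ioo (0 : ℝ) μ, H y := by
      have h := integral_image_eq_integral_abs_deriv_smul
        (measurableSet_Ioo (a := (0 : ℝ)) (b := μ)) (hcube_deriv _)
        (hcube_inj 0 μ le_rfl) f
      rw [himg1] at h
      exact h
    -- change of variables 2 : (m, (2μ)³)
    have himg2 : (fun y : ℝ => y ^ (3 : ℕ)) '' Set.Ioo μ (2 * μ)
        = Set.Ioo m ((2 * μ) ^ (3 : ℕ)) := by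
      rw [cube_image_Ioo hμ0.le, hμ3]
    have hchg2 : ∫ x in Set.Ioo m ((2 * μ) ^ (3 : ℕ)), f x
        = ∫ y in Set.Ioo μ (2 * μ), H y := by
      have h := integral_image_eq_integral_abs_deriv_smul
        (measurableSet_Ioo (a := μ) (b := 2 * μ)) (hcube_deriv _)
        (hcube_inj μ (2 * μ) hμ0.le) f
      rw [himg2] at h
      exact h
    -- reflection
    have hrefl : ∫ y in Set.Ioo μ (2 * μ), H y
        = ∫ y in Set.Ioo (0 : ℝ) μ, H (2 * μ - y) := by
      have h := integral_image_eq_integral_abs_deriv_smul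
        (measurableSet_Ioo (a := (0 : ℝ)) (b := μ)) hrefl_deriv hrefl_inj H
      rw [hrefl_img] at h
      simpa using h
    -- integrability
    have hint1 : IntegrableOn H (Set.Ioo (0 : ℝ) μ) := by
      have h := (integrableOn_image_iff_integrableOn_abs_deriv_smul
        (measurableSet_Ioo (a := (0 : ℝ)) (b := μ)) (hcube_deriv _)
        (hcube_inj 0 μ le_rfl) f).1
      rw [himg1] at h
      exact h (hfint.mono_set Set.Ioo_subset_Ioi_self)
    have hint2 : IntegrableOn H (Set.Ioo μ (2 * μ)) := by
      have h := (integrableOn_image_iff_integrableOn_abs_deriv_smul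
        (measurableSet_Ioo (a := μ) (b := 2 * μ)) (hcube_deriv _)
        (hcube_inj μ (2 * μ) hμ0.le) f).1
      rw [himg2] at h
      exact h (hfint.mono_set (fun x hx => hm.trans hx.1))
    have hintG : IntegrableOn (fun y => H (2 * μ - y)) (Set.Ioo (0 : ℝ) μ) := by
      have h := (integrableOn_image_iff_integrableOn_abs_deriv_smul
        (measurableSet_Ioo (a := (0 : ℝ)) (b := μ)) hrefl_deriv hrefl_inj H).1
      rw [hrefl_img] at h
      have h2 := h hint2
      simpa using h2
    -- strict pointwise comparison
    have hpt : ∀ y ∈ Set.Ioo (0 : ℝ) μ, H y < H (2 * μ - y) := by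
      intro y hy
      have := key_pointwise a μ y (by rw [hμ3]) hy.1 hy.2
      simpa [hH, hf, smul_eq_mul] using this
    -- strict integral inequality
    have hlt : ∫ y in Set.Ioo (0 : ℝ) μ, H y < ∫ y in Set.Ioo (0 : ℝ) μ, H (2 * μ - y) := by
      have hsub : 0 < ∫ y in Set.Ioo (0 : ℝ) μ, (H (2 * μ - y) - H y) := by
        rw [setIntegral_pos_iff_support_of_nonneg_ae]
        · apply lt_of_lt_of_le _ (measure_mono (Set.subset_inter
            (fun y hy => Function.mem_support.mpr (ne_of_gt (sub_pos.2 (hpt y hy))))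
            subset_rfl))
          rw [Real.volume_Ioo]
          simpa using hμ0
        · exact (ae_restrict_iff' measurableSet_Ioo).2
            (Filter.Eventually.of_forall fun y hy => (sub_pos.2 (hpt y hy)).le)
        · exact hintG.sub hint1
      have hsubeq := MeasureTheory.integral_sub hintG hint1
      rw [hsubeq] at hsub
      linarith
    -- assemble the key strict inequality on x-side
    have nonnegIoi : ∀ s : ℝ, 0 ≤ s → (0 : ℝ → ℝ) ≤ᵐ[volume.restrict (Set.Ioi s)] f := by
      intro s hs
      exact (ae_restrict_iff' measurableSet_Ioi).2
        (Filter.Eventually.of_forall fun x hx => hfnn x (lt_of_le_of_lt hs hx))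
    have e2 : ∫ x in Set.Ioo m ((2 * μ) ^ (3 : ℕ)), f x ≤ ∫ x in Set.Ioi m, f x :=
      setIntegral_mono_set (hfint.mono_set (Set.Ioi_subset_Ioi hm.le))
        (nonnegIoi m hm.le)
        (HasSubset.Subset.eventuallyLE (fun x hx => hx.1))
    have key : ∫ x in Set.Ioc (0 : ℝ) m, f x < ∫ x in Set.Ioi m, f x := by
      calc ∫ x in Set.Ioc (0 : ℝ) m, f x = ∫ x in Set.Ioo (0 : ℝ) m, f x :=
            integral_Ioc_eq_integral_Ioo
        _ = ∫ y in Set.Ioo (0 : ℝ) μ, H y := hchg1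
        _ < ∫ y in Set.Ioo (0 : ℝ) μ, H (2 * μ - y) := hlt
        _ = ∫ y in Set.Ioo μ (2 * μ), H y := hrefl.symm
        _ = ∫ x in Set.Ioo m ((2 * μ) ^ (3 : ℕ)), f x := hchg2.symm
        _ ≤ ∫ x in Set.Ioi m, f x := e2
    have hsplit : ∫ x in Set.Ioi (0 : ℝ), f x
        = (∫ x in Set.Ioc (0 : ℝ) m, f x) + ∫ x in Set.Ioi m, f x := by
      rw [← setIntegral_union (Set.Ioc_disjoint_Ioi le_rfl) measurableSet_Ioi
        (hfint.mono_set Set.Ioc_subset_Ioi_self)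
        (hfint.mono_set (Set.Ioi_subset_Ioi hm.le)), Set.Ioc_union_Ioi_eq_Ioi hm.le]
    have hset : Set.Ioi t ∩ Set.Ioi 0 = Set.Ioi t :=
      Set.inter_eq_self_of_subset_left (Set.Ioi_subset_Ioi h0.le)
    have hmono : ∫ x in Set.Ioi m, f x ≤ ∫ x in Set.Ioi t, f x :=
      setIntegral_mono_set (hfint.mono_set (Set.Ioi_subset_Ioi h0.le))
        (nonnegIoi t h0.le)
        (HasSubset.Subset.eventuallyLE (Set.Ioi_subset_Ioi ht))
    rw [hset]
    have : Real.Gamma a = (∫ x in Set.Ioc (0 : ℝ) m, f x) + ∫ x in Set.Ioi m, f x := by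
      rw [hΓ, hsplit]
    rw [this]
    have hgoal : ∫ x in Set.Ioi t, x ^ (a - 1) * Real.exp (-x) = ∫ x in Set.Ioi t, f x := rfl
    rw [hgoal]
    linarith
end

section
/- For every s ∈ ℂ, lim_{n→∞} Γ(n + s) / ((n−1)! · n^s) = 1. -/
open Complex Filter Finset Topology

private lemma natCpow_ne_zero {n : ℕ} (hn : n ≠ 0) (s : ℂ) : (n : ℂ) ^ s ≠ 0 := by
  rw [Ne, Complex.cpow_eq_zero_iff, not_and_or]
  left
  exact_mod_cast hn

private lemma cpow_ratio_tendsto (s : ℂ) :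
    Tendsto (fun n : ℕ => ((n - 1 : ℕ) : ℂ) ^ s / (n : ℂ) ^ s) atTop (𝓝 1) := by
  have h1 : Tendsto (fun n : ℕ => (((n - 1 : ℕ) : ℝ) / (n : ℝ))) atTop (𝓝 1) := by
    have h2 : Tendsto (fun n : ℕ => (1 : ℝ) - (n : ℝ)⁻¹) atTop (𝓝 1) := by
      simpa using tendsto_const_nhds.sub (tendsto_inv_atTop_nhds_zero_nat (𝕜 := ℝ))
    refine h2.congr' ?_
    filter_upwards [eventually_ge_atTop 1] with n hn
    have hn0 : (n : ℝ) ≠ 0 := by positivity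
    rw [Nat.cast_sub hn]
    field_simp
    norm_num
  have h3 : Tendsto (fun n : ℕ => ((((n - 1 : ℕ) : ℝ) / (n : ℝ) : ℝ) : ℂ)) atTop (𝓝 1) := by
    have := (Complex.continuous_ofReal.tendsto 1).comp h1
    simpa [Function.comp_def] using this
  have h4 : ContinuousAt (fun z : ℂ => z ^ s) 1 :=
    continuousAt_cpow_const (by simp [Complex.slitPlane])
  have h5 := (h4.tendsto.comp h3)
  rw [Complex.one_cpow] at h5
  simp only [Function.comp_def] at h5
  refine h5.congr' ?_
  filter_upwards [eventually_ge_atTop 1] with n hn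
  have hn0 : (n : ℝ) ≠ 0 := by positivity
  have key := Complex.mul_cpow_ofReal_nonneg
    (div_nonneg (Nat.cast_nonneg (n - 1)) (Nat.cast_nonneg n)) (Nat.cast_nonneg n) s
  have hne : (n : ℂ) ^ s ≠ 0 := natCpow_ne_zero (by omega) s
  rw [eq_div_iff hne, ← Complex.ofReal_natCast n, ← key]
  congr 1
  have h1n : 1 ≤ n := hn
  push_cast [Nat.cast_sub h1n]
  rw [div_mul_cancel₀]
  exact_mod_cast hn0

private lemma nat_div_add_tendsto (s : ℂ) :
    Tendsto (fun n : ℕ => (n : ℂ) / ((n : ℂ) + s)) atTop (𝓝 1) := by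
  have h2 : Tendsto (fun n : ℕ => (1 : ℂ) + s * ((n : ℝ)⁻¹ : ℝ)) atTop (𝓝 1) := by
    have : Tendsto (fun n : ℕ => (((n : ℝ)⁻¹ : ℝ) : ℂ)) atTop (𝓝 0) := by
      have := (Complex.continuous_ofReal.tendsto 0).comp tendsto_inv_atTop_nhds_zero_nat
      simpa [Function.comp_def] using this
    simpa using tendsto_const_nhds.add (tendsto_const_nhds.mul this)
  have h3 : Tendsto (fun n : ℕ => ((n : ℂ) + s) / (n : ℂ)) atTop (𝓝 1) := by
    refine h2.congr' ?_
    filter_upwards [eventually_ge_atTop 1] with n hn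
    have hn0 : (n : ℂ) ≠ 0 := by exact_mod_cast Nat.cast_ne_zero.mpr (by omega)
    push_cast
    field_simp
  have h4 := h3.inv₀ one_ne_zero
  simp only [inv_div, inv_one] at h4
  exact h4

private lemma gamma_prod {s : ℂ} (hs : 0 < s.re) (n : ℕ) :
    Complex.Gamma (s + n) = Complex.Gamma s * ∏ j ∈ range n, (s + j) := by
  induction n with
  | zero => simp
  | succ m ih =>
    have hne : s + m ≠ 0 := by
      intro h
      have : (s + m).re = 0 := by rw [h]; simp
      simp only [Complex.add_re, Complex.natCast_re] at this
      have : (0 : ℝ) ≤ (m : ℝ) := Nat.cast_nonneg m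
      linarith [hs]
    have : s + (m + 1 : ℕ) = (s + m) + 1 := by push_cast; ring
    rw [this, Complex.Gamma_add_one _ hne, ih, prod_range_succ]
    ring

private lemma base_case {s : ℂ} (hs : 0 < s.re) :
    Tendsto (fun n : ℕ =>
        Complex.Gamma ((n : ℂ) + s) / (((n - 1).factorial : ℂ) * (n : ℂ) ^ s))
      atTop (nhds 1) := by
  have hΓ : Complex.Gamma s ≠ 0 := Complex.Gamma_ne_zero_of_re_pos hs
  have hseq : Tendsto (fun n : ℕ => Complex.GammaSeq s (n - 1)) atTop (𝓝 (Complex.Gamma s)) :=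
    (Complex.GammaSeq_tendsto_Gamma s).comp (tendsto_sub_atTop_nat 1)
  have h1 : Tendsto (fun n : ℕ =>
      (Complex.Gamma s / Complex.GammaSeq s (n - 1)) * (((n - 1 : ℕ) : ℂ) ^ s / (n : ℂ) ^ s))
      atTop (𝓝 1) := by
    have hconst : Tendsto (fun _ : ℕ => Complex.Gamma s) atTop (𝓝 (Complex.Gamma s)) :=
      tendsto_const_nhds
    have := (hconst.div hseq hΓ).mul (cpow_ratio_tendsto s)
    simpa [div_self hΓ] using this
  refine h1.congr' ?_
  filter_upwards [eventually_ge_atTop 2] with n hn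
  have hn1 : 1 ≤ n - 1 := by omega
  have hprod : ∀ m : ℕ, ∏ j ∈ range m, (s + j) ≠ 0 := by
    intro m
    refine prod_ne_zero_iff.mpr fun j _ => ?_
    intro h
    have : (s + j).re = 0 := by rw [h]; simp
    simp only [Complex.add_re, Complex.natCast_re] at this
    have : (0 : ℝ) ≤ (j : ℝ) := Nat.cast_nonneg j
    linarith [hs]
  have hcast : ((n - 1 : ℕ) : ℂ) = (n : ℂ) - 1 := by
    rw [Nat.cast_sub (by omega : 1 ≤ n)]; norm_num
  have hgs : Complex.GammaSeq s (n - 1) =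
      ((n : ℂ) - 1) ^ s * ((n - 1).factorial : ℂ) / ∏ j ∈ range n, (s + j) := by
    have hn' : n - 1 + 1 = n := by omega
    rw [Complex.GammaSeq, hn', hcast]
  have hfac : ((n - 1).factorial : ℂ) ≠ 0 := by
    exact_mod_cast (n - 1).factorial_ne_zero
  have hc1 : ((n : ℂ) - 1) ^ s ≠ 0 := by
    rw [← hcast]; exact natCpow_ne_zero (by omega) s
  have hc2 : (n : ℂ) ^ s ≠ 0 := natCpow_ne_zero (by omega) s
  have hΓn : Complex.Gamma ((n : ℂ) + s) = Complex.Gamma s * ∏ j ∈ range n, (s + j) := by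
    rw [add_comm]; exact gamma_prod hs n
  rw [hΓn, hgs, hcast]
  field_simp

private lemma step_down (s : ℂ)
    (h : Tendsto (fun n : ℕ =>
        Complex.Gamma ((n : ℂ) + (s + 1)) / (((n - 1).factorial : ℂ) * (n : ℂ) ^ (s + 1)))
      atTop (nhds 1)) :
    Tendsto (fun n : ℕ =>
        Complex.Gamma ((n : ℂ) + s) / (((n - 1).factorial : ℂ) * (n : ℂ) ^ s))
      atTop (nhds 1) := by
  have h1 := h.mul (nat_div_add_tendsto s)
  rw [mul_one] at h1
  refine h1.congr' ?_
  obtain ⟨N, hN⟩ := exists_nat_gt ‖s‖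
  filter_upwards [eventually_ge_atTop (N + 1)] with n hn
  have hns : (n : ℂ) + s ≠ 0 := by
    intro h0
    have he : (n : ℂ) = -s := by linear_combination h0
    have h2 : ‖(n : ℂ)‖ = ‖s‖ := by rw [he, norm_neg]
    simp only [Complex.norm_natCast] at h2
    have hNn : (N : ℝ) < n := by exact_mod_cast (by omega : N < n)
    linarith
  have hn0 : (n : ℂ) ≠ 0 := Nat.cast_ne_zero.mpr (by omega)
  have hfac : ((n - 1).factorial : ℂ) ≠ 0 := by
    exact_mod_cast (n - 1).factorial_ne_zero
  have hc2 : (n : ℂ) ^ s ≠ 0 := natCpow_ne_zero (by omega) s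
  have hΓ : Complex.Gamma ((n : ℂ) + (s + 1)) = ((n : ℂ) + s) * Complex.Gamma ((n : ℂ) + s) := by
    have : (n : ℂ) + (s + 1) = ((n : ℂ) + s) + 1 := by ring
    rw [this, Complex.Gamma_add_one _ hns]
  have hpow : (n : ℂ) ^ (s + 1) = (n : ℂ) ^ s * (n : ℂ) := by
    rw [Complex.cpow_add _ _ hn0, Complex.cpow_one]
  rw [hΓ, hpow]
  field_simp

theorem gamma_ratio_tendsto_one (s : ℂ) :
    Tendsto (fun n : ℕ =>
        Complex.Gamma ((n : ℂ) + s) / (((n - 1).factorial : ℂ) * (n : ℂ) ^ s))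
      atTop (nhds 1) := by
  obtain ⟨m, hm⟩ := exists_nat_gt (-s.re)
  have key : ∀ m : ℕ, ∀ s : ℂ, 0 < (s + m).re →
      Tendsto (fun n : ℕ =>
        Complex.Gamma ((n : ℂ) + s) / (((n - 1).factorial : ℂ) * (n : ℂ) ^ s))
      atTop (nhds 1) := by
    intro m
    induction m with
    | zero => intro s hs; simpa using base_case (by simpa using hs)
    | succ k ih =>
      intro s hs
      refine step_down s (ih (s + 1) ?_)
      have : ((s + 1) + k).re = (s + (k + 1 : ℕ)).re := by push_cast; ring_nf
      rw [this]
      exact hs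
  refine key m s ?_
  simp only [Complex.add_re, Complex.natCast_re]
  linarith
end

section
/- Let G be a second-countable, locally compact Hausdorff, unimodular group with Haar measure μ_G, Γ a discrete subgroup, Λ ≤ Γ, and χ : Γ → ℂ× a unitary character. Let φ : G → ℂ be measurable with φ(λg) = χ(λ)φ(g) for all λ ∈ Λ, g ∈ G, and |φ| ∈ L¹(Λ\G). Then the Poincaré series (P φ)(g) := ∑_{γ ∈ Λ\Γ} conj(χ(γ)) φ(γg) converges absolutely for almost every g ∈ G, satisfies (P φ)(γ·) = χ(γ)·(P φ) for all γ ∈ Γ, and |P φ| ∈ L¹(Γ\G). -/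
open MeasureTheory Pointwise

section Aux
variable {K : Type*} [Group K] (H : Subgroup K)

/-- Right multiplication on the quotient by right cosets. -/
def PSrmul (γ : K) :
    Quotient (QuotientGroup.rightRel H) ≃ Quotient (QuotientGroup.rightRel H) where
  toFun := Quotient.lift (fun a => Quotient.mk (QuotientGroup.rightRel H) (a * γ))
    (fun a b h => Quotient.sound (QuotientGroup.rightRel_apply.mpr (by
      have h' := QuotientGroup.rightRel_apply.mp h
      have : (b * γ) * (a * γ)⁻¹ = b * a⁻¹ := by group
      rwa [this])))
  invFun := Quotient.lift (fun a => Quotient.mk (QuotientGroup.rightRel H) (a * γ⁻¹))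
    (fun a b h => Quotient.sound (QuotientGroup.rightRel_apply.mpr (by
      have h' := QuotientGroup.rightRel_apply.mp h
      have : (b * γ⁻¹) * (a * γ⁻¹)⁻¹ = b * a⁻¹ := by group
      rwa [this])))
  left_inv := by
    refine Quotient.ind fun a => ?_
    simp [mul_assoc]
  right_inv := by
    refine Quotient.ind fun a => ?_
    simp [mul_assoc]

lemma PSrmul_mk (γ a : K) :
    PSrmul H γ (Quotient.mk (QuotientGroup.rightRel H) a)
      = Quotient.mk (QuotientGroup.rightRel H) (a * γ) := rfl

lemma PSrmul_exists_sigma (γ : K) (q : Quotient (QuotientGroup.rightRel H)) :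
    ∃ σ : H, q.out * γ = (σ : K) * (PSrmul H γ q).out := by
  have h2 : PSrmul H γ q = Quotient.mk (QuotientGroup.rightRel H) (q.out * γ) := by
    conv_lhs => rw [← Quotient.out_eq q]
    rfl
  have h1 : Quotient.mk (QuotientGroup.rightRel H) (PSrmul H γ q).out
      = Quotient.mk (QuotientGroup.rightRel H) (q.out * γ) := by
    rw [Quotient.out_eq, h2]
  have hrel := QuotientGroup.rightRel_apply.mp (Quotient.exact h1)
  exact ⟨⟨_, hrel⟩, by group⟩

/-- The bijection `H × (H\K) ≃ K`. -/
noncomputable def PSprod : H × Quotient (QuotientGroup.rightRel H) ≃ K where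
  toFun p := (p.1 : K) * p.2.out
  invFun γ := (⟨γ * ((Quotient.mk (QuotientGroup.rightRel H) γ).out)⁻¹, by
      exact QuotientGroup.rightRel_apply.mp
        (Quotient.exact (Quotient.out_eq (Quotient.mk (QuotientGroup.rightRel H) γ)))⟩,
    Quotient.mk (QuotientGroup.rightRel H) γ)
  left_inv := by
    rintro ⟨σ, q⟩
    have hrel : (QuotientGroup.rightRel H) ((σ : K) * q.out) q.out :=
      QuotientGroup.rightRel_apply.mpr (by
        have : (q.out : K) * ((σ : K) * q.out)⁻¹ = (σ : K)⁻¹ := by group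
        rw [this]
        exact inv_mem σ.2)
    have hmk : Quotient.mk (QuotientGroup.rightRel H) ((σ : K) * q.out) = q := by
      rw [Quotient.sound hrel, Quotient.out_eq]
    refine Prod.ext (Subtype.ext ?_) hmk
    dsimp only
    rw [hmk]
    group
  right_inv := fun γ => by
    dsimp only
    group

lemma PSprod_apply (p : H × Quotient (QuotientGroup.rightRel H)) :
    (PSprod H p : K) = (p.1 : K) * p.2.out := rfl

end Aux

theorem PScountable (X : Type*) [TopologicalSpace X] [SecondCountableTopology X]
    [DiscreteTopology X] : Countable X := by
  obtain ⟨s, hsc, hsd⟩ := TopologicalSpace.exists_countable_dense X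
  have hs : s = Set.univ := by
    rw [← hsd.closure_eq, IsClosed.closure_eq (isClosed_discrete s)]
  rw [hs] at hsc
  exact Set.countable_univ_iff.mp hsc

theorem PStsum_nnnorm {ι : Type*} (u : ι → ℂ) :
    (‖∑' i, u i‖₊ : ENNReal) ≤ ∑' i, (‖u i‖₊ : ENNReal) := by
  by_cases hs : Summable fun i => ‖u i‖₊
  · rw [← ENNReal.coe_tsum hs]
    exact_mod_cast nnnorm_tsum_le hs
  · have : (∑' i, (‖u i‖₊ : ENNReal)) = ⊤ := by
      by_contra h
      exact hs (ENNReal.tsum_coe_ne_top_iff_summable.mp h)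
    rw [this]
    exact le_top

set_option maxHeartbeats 1000000 in
theorem poincare_series_convergence
    (G : Type*) [Group G] [TopologicalSpace G] [IsTopologicalGroup G]
    [LocallyCompactSpace G] [T2Space G] [SecondCountableTopology G]
    [MeasurableSpace G] [BorelSpace G]
    (μ : Measure G) [μ.IsHaarMeasure] [μ.IsMulRightInvariant]
    (Γ Λ : Subgroup G) [DiscreteTopology Γ] (hΛΓ : Λ ≤ Γ)
    (χ : Γ →* ℂ) (hχ : ∀ γ : Γ, ‖χ γ‖ = 1)
    (φ : G → ℂ) (hφmeas : Measurable φ)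
    (hφeq : ∀ (lam : Λ) (g : G), φ ((lam : G) * g) = χ ⟨(lam : G), hΛΓ lam.2⟩ * φ g)
    (FΛ FΓ : Set G)
    (hFΛ : IsFundamentalDomain Λ FΛ μ) (hFΓ : IsFundamentalDomain Γ FΓ μ)
    (hφint : IntegrableOn (fun g => ‖φ g‖) FΛ μ) :
    (∀ᵐ g ∂μ, Summable (fun q : Quotient (QuotientGroup.rightRel (Λ.subgroupOf Γ)) =>
        ‖φ ((q.out : G) * g)‖))
    ∧ (∀ γ : Γ, ∀ᵐ g ∂μ,
        (∑' q : Quotient (QuotientGroup.rightRel (Λ.subgroupOf Γ)),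
            (starRingEnd ℂ) (χ q.out) * φ ((q.out : G) * ((γ : G) * g)))
          = χ γ * ∑' q : Quotient (QuotientGroup.rightRel (Λ.subgroupOf Γ)),
              (starRingEnd ℂ) (χ q.out) * φ ((q.out : G) * g))
    ∧ IntegrableOn
        (fun g => ‖∑' q : Quotient (QuotientGroup.rightRel (Λ.subgroupOf Γ)),
            (starRingEnd ℂ) (χ q.out) * φ ((q.out : G) * g)‖)
        FΓ μ := by
  haveI : Countable Γ := PScountable Γ
  haveI : Countable Λ := (Subgroup.inclusion_injective hΛΓ).countable
  -- abbreviations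
  have hχ_nn : ∀ ρ : Γ, ‖χ ρ‖₊ = 1 := fun ρ => by
    apply NNReal.coe_injective
    simp [coe_nnnorm, hχ]
  have hχ_mul_conj : ∀ ρ : Γ, (χ ρ) * (starRingEnd ℂ) (χ ρ) = 1 := fun ρ => by
    rw [Complex.mul_conj, Complex.normSq_eq_norm_sq, hχ]
    norm_num
  have hfinv : ∀ (lam : Λ) (x : G), ‖φ ((lam : G) * x)‖₊ = ‖φ x‖₊ := fun lam x => by
    rw [hφeq lam x, nnnorm_mul, hχ_nn, one_mul]
  -- the decomposition of a term after right translation by γ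
  have hdecomp : ∀ (γ : Γ) (q : Quotient (QuotientGroup.rightRel (Λ.subgroupOf Γ))) (g : G),
      ∃ σ : Λ.subgroupOf Γ,
        q.out * γ = (σ : Γ) * (PSrmul (Λ.subgroupOf Γ) γ q).out ∧
        φ ((q.out : G) * ((γ : G) * g))
          = χ (σ : Γ) * φ (((PSrmul (Λ.subgroupOf Γ) γ q).out : G) * g) := by
    intro γ q g
    obtain ⟨σ, hσ⟩ := PSrmul_exists_sigma (Λ.subgroupOf Γ) γ q
    refine ⟨σ, hσ, ?_⟩
    have hmem : ((σ : Γ) : G) ∈ Λ := Subgroup.mem_subgroupOf.mp σ.2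
    have h1 : ((q.out : Γ) : G) * ((γ : G) * g)
        = (((σ : Γ) : G)) * ((((PSrmul (Λ.subgroupOf Γ) γ q).out : Γ) : G) * g) := by
      rw [← mul_assoc, ← mul_assoc]
      congr 1
      rw [← Subgroup.coe_mul, hσ, Subgroup.coe_mul]
    rw [h1, hφeq ⟨((σ : Γ) : G), hmem⟩]
  -- term invariance of absolute values
  have habs : ∀ (γ : Γ) (q : Quotient (QuotientGroup.rightRel (Λ.subgroupOf Γ))) (g : G),
      ‖φ ((q.out : G) * ((γ : G) * g))‖
        = ‖φ (((PSrmul (Λ.subgroupOf Γ) γ q).out : G) * g)‖ := by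
    intro γ q g
    obtain ⟨σ, -, h2⟩ := hdecomp γ q g
    rw [h2, norm_mul, hχ, one_mul]
  have hSiff : ∀ (γ : Γ) (g : G),
      Summable (fun q : Quotient (QuotientGroup.rightRel (Λ.subgroupOf Γ)) =>
          ‖φ ((q.out : G) * ((γ : G) * g))‖)
        ↔ Summable (fun q : Quotient (QuotientGroup.rightRel (Λ.subgroupOf Γ)) =>
          ‖φ ((q.out : G) * g)‖) := by
    intro γ g
    have h1 : (fun q : Quotient (QuotientGroup.rightRel (Λ.subgroupOf Γ)) =>
        ‖φ ((q.out : G) * ((γ : G) * g))‖)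
        = (fun q : Quotient (QuotientGroup.rightRel (Λ.subgroupOf Γ)) =>
          ‖φ ((q.out : G) * g)‖) ∘ (PSrmul (Λ.subgroupOf Γ) γ) := by
      funext q
      exact habs γ q g
    rw [h1]
    exact Equiv.summable_iff _
  -- the main lintegral computation
  have hsmulΓ : ∀ (γ : Γ) (s : Set G), γ • s = ((γ : G)) • s := fun γ s => rfl
  have hsmulΛ : ∀ (lam : Λ) (s : Set G), lam • s = ((lam : G)) • s := fun lam s => rfl
  have htrans : ∀ (c : G), (∫⁻ x in FΓ, (‖φ (c * x)‖₊ : ENNReal) ∂μ)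
      = ∫⁻ x in c • FΓ, (‖φ x‖₊ : ENNReal) ∂μ := by
    intro c
    have h := (measurePreserving_mul_left μ c).setLIntegral_comp_emb
      (MeasurableEquiv.mulLeft c).measurableEmbedding (fun x => (‖φ x‖₊ : ENNReal)) FΓ
    have hset : (fun x => c * x) '' FΓ = c • FΓ := by
      rw [← Set.image_smul]
      rfl
    rw [h, hset]
  have key2 : ∀ q : Quotient (QuotientGroup.rightRel (Λ.subgroupOf Γ)),
      (∫⁻ x in FΓ, (‖φ ((q.out : G) * x)‖₊ : ENNReal) ∂μ)
        = ∑' σ : Λ.subgroupOf Γ,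
            ∫⁻ x in ((((σ : Γ) * q.out : Γ) : G)) • FΓ ∩ FΛ, (‖φ x‖₊ : ENNReal) ∂μ := by
    intro q
    rw [htrans ((q.out : Γ) : G),
      hFΛ.setLIntegral_eq_tsum' (fun x => (‖φ x‖₊ : ENNReal)) (((q.out : Γ) : G) • FΓ)]
    have hterm : ∀ lam : Λ,
        (∫⁻ x in lam • ((((q.out : Γ) : G)) • FΓ) ∩ FΛ, (‖φ (lam⁻¹ • x)‖₊ : ENNReal) ∂μ)
          = ∫⁻ x in (((lam : G)) * ((q.out : Γ) : G)) • FΓ ∩ FΛ, (‖φ x‖₊ : ENNReal) ∂μ := by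
      intro lam
      have h1 : ∀ x : G, (‖φ (lam⁻¹ • x)‖₊ : ENNReal) = (‖φ x‖₊ : ENNReal) := by
        intro x
        have hsm : (lam⁻¹ • x : G) = ((lam⁻¹ : Λ) : G) * x := rfl
        rw [hsm, hfinv lam⁻¹ x]
      simp only [h1]
      rw [hsmulΛ, smul_smul]
    simp only [hterm]
    rw [← Equiv.tsum_eq (Subgroup.subgroupOfEquivOfLe hΛΓ).toEquiv]
    refine tsum_congr fun σ => ?_
    have hcoe : (((Subgroup.subgroupOfEquivOfLe hΛΓ).toEquiv σ : Λ) : G) * ((q.out : Γ) : G)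
        = (((σ : Γ) * q.out : Γ) : G) := by
      rw [Subgroup.coe_mul]
      rfl
    rw [hcoe]
  have key1 : (∫⁻ x in FΛ, (‖φ x‖₊ : ENNReal) ∂μ)
      = ∑' p : (Λ.subgroupOf Γ) × Quotient (QuotientGroup.rightRel (Λ.subgroupOf Γ)),
          ∫⁻ x in ((((p.1 : Γ) * p.2.out : Γ) : G)) • FΓ ∩ FΛ, (‖φ x‖₊ : ENNReal) ∂μ := by
    rw [hFΓ.setLIntegral_eq_tsum (fun x => (‖φ x‖₊ : ENNReal)) FΛ,
      ← (PSprod (Λ.subgroupOf Γ)).tsum_eq]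
    refine tsum_congr fun p => ?_
    rw [Set.inter_comm, hsmulΓ]
    rfl
  have key3 : (∫⁻ x in FΛ, (‖φ x‖₊ : ENNReal) ∂μ)
      = ∑' q : Quotient (QuotientGroup.rightRel (Λ.subgroupOf Γ)),
          ∫⁻ x in FΓ, (‖φ ((q.out : G) * x)‖₊ : ENNReal) ∂μ := by
    rw [key1, ENNReal.tsum_prod', ENNReal.tsum_comm]
    exact tsum_congr fun q => (key2 q).symm
  have hfin : (∫⁻ x in FΛ, (‖φ x‖₊ : ENNReal) ∂μ) < ⊤ := by
    have h2 := hφint.2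
    rw [HasFiniteIntegral] at h2
    have hx : ∀ z : ℂ, ‖‖z‖‖ₑ = ‖z‖₊ := fun z => by
      rw [enorm_eq_nnnorm, nnnorm_norm]
    simpa only [hx] using h2
  have key4 : (∫⁻ x in FΓ,
      (∑' q : Quotient (QuotientGroup.rightRel (Λ.subgroupOf Γ)),
        (‖φ ((q.out : G) * x)‖₊ : ENNReal)) ∂μ) < ⊤ := by
    rw [lintegral_tsum (f := fun (q : Quotient (QuotientGroup.rightRel (Λ.subgroupOf Γ)))
        (a : G) => (‖φ ((q.out : G) * a)‖₊ : ENNReal)) fun q =>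
      Measurable.aemeasurable (by exact (hφmeas.comp (measurable_const_mul _)).nnnorm.coe_nnreal_ennreal)]
    rw [← key3]
    exact hfin
  have hTmeas : Measurable (fun x : G =>
      (∑' q : Quotient (QuotientGroup.rightRel (Λ.subgroupOf Γ)),
        (‖φ ((q.out : G) * x)‖₊ : ENNReal))) :=
    Measurable.ennreal_tsum fun q => by exact (hφmeas.comp (measurable_const_mul _)).nnnorm.coe_nnreal_ennreal
  have hae : ∀ᵐ g ∂(μ.restrict FΓ),
      (∑' q : Quotient (QuotientGroup.rightRel (Λ.subgroupOf Γ)),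
        (‖φ ((q.out : G) * g)‖₊ : ENNReal)) < ⊤ :=
    ae_lt_top hTmeas key4.ne
  have hsummable_of_lt : ∀ g : G,
      (∑' q : Quotient (QuotientGroup.rightRel (Λ.subgroupOf Γ)),
        (‖φ ((q.out : G) * g)‖₊ : ENNReal)) < ⊤ →
      Summable (fun q : Quotient (QuotientGroup.rightRel (Λ.subgroupOf Γ)) =>
        ‖φ ((q.out : G) * g)‖) := by
    intro g hg
    have h0 := ENNReal.tsum_coe_ne_top_iff_summable.mp hg.ne
    have h1 := NNReal.summable_coe.mpr h0
    refine (summable_congr fun q => ?_).mpr h1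
    rw [coe_nnnorm]
  refine ⟨?_, ?_, ?_⟩
  · -- a.e. summability on G
    have hS_FΓ : μ ({g : G | ¬ Summable
        (fun q : Quotient (QuotientGroup.rightRel (Λ.subgroupOf Γ)) =>
          ‖φ ((q.out : G) * g)‖)} ∩ FΓ) = 0 := by
      rw [← Measure.restrict_apply₀' hFΓ.nullMeasurableSet]
      refine measure_mono_null (fun g hg => ?_) (ae_iff.mp hae)
      intro hlt
      exact hg (hsummable_of_lt g hlt)
    have hinv : ∀ γ : Γ, γ • {g : G | ¬ Summable
        (fun q : Quotient (QuotientGroup.rightRel (Λ.subgroupOf Γ)) =>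
          ‖φ ((q.out : G) * g)‖)} = {g : G | ¬ Summable
        (fun q : Quotient (QuotientGroup.rightRel (Λ.subgroupOf Γ)) =>
          ‖φ ((q.out : G) * g)‖)} := by
      intro γ
      ext x
      rw [Set.mem_smul_set_iff_inv_smul_mem]
      simp only [Set.mem_setOf_eq]
      have hx : ((γ : G)) * (((γ⁻¹ : Γ) : G) * x) = x := by
        rw [← mul_assoc, ← Subgroup.coe_mul, mul_inv_cancel, Subgroup.coe_one, one_mul]
      have := hSiff γ (((γ⁻¹ : Γ) : G) * x)
      rw [hx] at this
      have hsm : (γ⁻¹ • x : G) = ((γ⁻¹ : Γ) : G) * x := rfl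
      rw [hsm]
      exact not_congr this.symm
    exact ae_iff.mpr (hFΓ.measure_zero_of_invariant _ hinv hS_FΓ)
  · -- transformation property
    intro γ
    refine Filter.Eventually.of_forall fun g => ?_
    have hterm : ∀ q : Quotient (QuotientGroup.rightRel (Λ.subgroupOf Γ)),
        (starRingEnd ℂ) (χ q.out) * φ ((q.out : G) * ((γ : G) * g))
          = χ γ * ((starRingEnd ℂ) (χ ((PSrmul (Λ.subgroupOf Γ) γ q).out))
              * φ (((PSrmul (Λ.subgroupOf Γ) γ q).out : G) * g)) := by
      intro q
      obtain ⟨σ, hσ, h2⟩ := hdecomp γ q g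
      rw [h2]
      have hm := congrArg χ hσ
      rw [map_mul, map_mul] at hm
      have hkey : (starRingEnd ℂ) (χ q.out) * χ (σ : Γ)
          = χ γ * (starRingEnd ℂ) (χ ((PSrmul (Λ.subgroupOf Γ) γ q).out)) := by
        have h1 : (starRingEnd ℂ) (χ q.out) * (χ q.out) = 1 := by
          rw [mul_comm]; exact hχ_mul_conj _
        have hd : (χ ((PSrmul (Λ.subgroupOf Γ) γ q).out))
            * (starRingEnd ℂ) (χ ((PSrmul (Λ.subgroupOf Γ) γ q).out)) = 1 := hχ_mul_conj _
        calc (starRingEnd ℂ) (χ q.out) * χ (σ : Γ)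
            = (starRingEnd ℂ) (χ q.out) * χ (σ : Γ)
              * ((χ ((PSrmul (Λ.subgroupOf Γ) γ q).out))
                * (starRingEnd ℂ) (χ ((PSrmul (Λ.subgroupOf Γ) γ q).out))) := by
              rw [hd, mul_one]
          _ = (starRingEnd ℂ) (χ q.out) * (χ (σ : Γ) * χ ((PSrmul (Λ.subgroupOf Γ) γ q).out))
              * (starRingEnd ℂ) (χ ((PSrmul (Λ.subgroupOf Γ) γ q).out)) := by ring
          _ = (starRingEnd ℂ) (χ q.out) * (χ q.out * χ γ)
              * (starRingEnd ℂ) (χ ((PSrmul (Λ.subgroupOf Γ) γ q).out)) := by rw [← hm]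
          _ = ((starRingEnd ℂ) (χ q.out) * χ q.out) * (χ γ
              * (starRingEnd ℂ) (χ ((PSrmul (Λ.subgroupOf Γ) γ q).out))) := by ring
          _ = χ γ * (starRingEnd ℂ) (χ ((PSrmul (Λ.subgroupOf Γ) γ q).out)) := by
              rw [h1, one_mul]
      calc (starRingEnd ℂ) (χ q.out)
            * (χ (σ : Γ) * φ (((PSrmul (Λ.subgroupOf Γ) γ q).out : G) * g))
          = ((starRingEnd ℂ) (χ q.out) * χ (σ : Γ))
            * φ (((PSrmul (Λ.subgroupOf Γ) γ q).out : G) * g) := by ring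
        _ = (χ γ * (starRingEnd ℂ) (χ ((PSrmul (Λ.subgroupOf Γ) γ q).out)))
            * φ (((PSrmul (Λ.subgroupOf Γ) γ q).out : G) * g) := by rw [hkey]
        _ = χ γ * ((starRingEnd ℂ) (χ ((PSrmul (Λ.subgroupOf Γ) γ q).out))
            * φ (((PSrmul (Λ.subgroupOf Γ) γ q).out : G) * g)) := by ring
    rw [tsum_congr hterm, tsum_mul_left]
    congr 1
    exact (PSrmul (Λ.subgroupOf Γ) γ).tsum_eq
      (fun q => (starRingEnd ℂ) (χ q.out) * φ ((q.out : G) * g))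
  · -- integrability on FΓ
    have haesm : AEStronglyMeasurable
        (fun g => ∑' q : Quotient (QuotientGroup.rightRel (Λ.subgroupOf Γ)),
          (starRingEnd ℂ) (χ q.out) * φ ((q.out : G) * g)) (μ.restrict FΓ) := by
      refine aestronglyMeasurable_of_tendsto_ae
        (Filter.atTop : Filter (Finset (Quotient (QuotientGroup.rightRel (Λ.subgroupOf Γ)))))
        (f := fun s g => ∑ q ∈ s, (starRingEnd ℂ) (χ q.out) * φ ((q.out : G) * g))
        (fun s => (Finset.measurable_sum _ fun q _ =>
          (measurable_const.mul (hφmeas.comp (measurable_const_mul _)))).aestronglyMeasurable) ?_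
      filter_upwards [hae] with g hg
      have hsum : Summable (fun q : Quotient (QuotientGroup.rightRel (Λ.subgroupOf Γ)) =>
          (starRingEnd ℂ) (χ q.out) * φ ((q.out : G) * g)) := by
        apply Summable.of_norm
        refine (summable_congr fun q => ?_).mpr (hsummable_of_lt g hg)
        rw [norm_mul, Complex.norm_conj, hχ, one_mul]
      exact hsum.hasSum
    have hnorm_eq : (fun g => ‖
        (∑' q : Quotient (QuotientGroup.rightRel (Λ.subgroupOf Γ)),
          (starRingEnd ℂ) (χ q.out) * φ ((q.out : G) * g))‖)
        = fun g => ‖∑' q : Quotient (QuotientGroup.rightRel (Λ.subgroupOf Γ)),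
          (starRingEnd ℂ) (χ q.out) * φ ((q.out : G) * g)‖ := by
      funext g
      rfl
    rw [IntegrableOn, hnorm_eq]
    refine ⟨haesm.norm, ?_⟩
    rw [HasFiniteIntegral]
    refine lt_of_le_of_lt (lintegral_mono fun g => ?_) key4
    rw [enorm_eq_nnnorm, nnnorm_norm]
    refine le_trans (PStsum_nnnorm _) (le_of_eq (tsum_congr fun q => ?_))
    congr 1
    rw [nnnorm_mul, starRingEnd_apply, nnnorm_star, hχ_nn, one_mul]
end

section
/- Let G, Γ, Λ, χ, φ be as in the Poincaré series lemma (φ measurable, φ(λg)=χ(λ)φ(g) for λ∈Λ, |φ|∈L¹(Λ\G)). Suppose C ⊆ G is Borel with C·C⁻¹ ∩ Γ ⊆ Λ, and suppose ∫_{Λ\ΛC} |φ| dμ_{Λ\G} > ∫_{Λ\(G∖ΛC)} |φ| dμ_{Λ\G}. Then ∫_{Γ\G} |∑_{γ∈Λ\Γ} conj(χ(γ)) φ(γg)| dμ_{Γ\G}(g) > 0; in particular the Poincaré series P φ is not identically zero almost everywhere. -/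
open MeasureTheory Pointwise
open scoped ENNReal NNReal

theorem poincare_series_nonvanishing_criterion
    (G : Type*) [Group G] [TopologicalSpace G] [IsTopologicalGroup G]
    [LocallyCompactSpace G] [T2Space G] [SecondCountableTopology G]
    [MeasurableSpace G] [BorelSpace G]
    (μ : Measure G) [μ.IsHaarMeasure] [μ.IsMulRightInvariant]
    (Γ Λ : Subgroup G) [DiscreteTopology Γ] (hΛΓ : Λ ≤ Γ)
    (χ : Γ →* ℂ) (hχ : ∀ γ : Γ, ‖χ γ‖ = 1)
    (φ : G → ℂ) (hφmeas : Measurable φ)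
    (hφeq : ∀ (lam : Λ) (g : G), φ ((lam : G) * g) = χ ⟨(lam : G), hΛΓ lam.2⟩ * φ g)
    (FΛ FΓ : Set G)
    (hFΛ : IsFundamentalDomain Λ FΛ μ) (hFΓ : IsFundamentalDomain Γ FΓ μ)
    (hφint : IntegrableOn (fun g => ‖φ g‖) FΛ μ)
    (C : Set G) (hCmeas : MeasurableSet C)
    (hC : ∀ c₁ ∈ C, ∀ c₂ ∈ C, c₁ * c₂⁻¹ ∈ Γ → c₁ * c₂⁻¹ ∈ Λ)
    (hgt : (∫ g in FΛ ∩ ((Λ : Set G) * C), ‖φ g‖ ∂μ)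
      > ∫ g in FΛ \ ((Λ : Set G) * C), ‖φ g‖ ∂μ) :
    0 < ∫ g in FΓ,
        ‖∑' q : Quotient (QuotientGroup.rightRel (Λ.subgroupOf Γ)),
          (starRingEnd ℂ) (χ q.out) * φ ((q.out : G) * g)‖ ∂μ := by
  classical
  have hΓcnt : Countable Γ := TopologicalSpace.separableSpace_iff_countable.mp inferInstance
  have hΛcnt : Countable Λ :=
    Function.Injective.countable (Subgroup.inclusion_injective hΛΓ)
  have hQcnt : Countable (Quotient (QuotientGroup.rightRel (Λ.subgroupOf Γ))) := inferInstance
  set F : Quotient (QuotientGroup.rightRel (Λ.subgroupOf Γ)) → G → ℂ :=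
    fun q g => (starRingEnd ℂ) (χ q.out) * φ ((q.out : G) * g) with hF
  -- basic norm facts
  have hnormφ : ∀ (lam : Λ) (g : G), ‖φ ((lam : G) * g)‖ = ‖φ g‖ := by
    intro lam g
    rw [hφeq lam g, norm_mul, hχ, one_mul]
  have hnn : ∀ (lam : Λ) (g : G), (‖φ ((lam : G) * g)‖₊ : ℝ≥0∞) = (‖φ g‖₊ : ℝ≥0∞) := by
    intro lam g
    have h : ‖φ ((lam : G) * g)‖₊ = ‖φ g‖₊ :=
      NNReal.coe_injective (by rw [coe_nnnorm, coe_nnnorm]; exact hnormφ lam g)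
    rw [h]
  have hFnorm : ∀ q g, ‖F q g‖ = ‖φ ((q.out : G) * g)‖ := by
    intro q g
    simp only [hF, norm_mul, Complex.norm_conj]
    rw [hχ, one_mul]
  -- the set D = Λ * C
  set D : Set G := (Λ : Set G) * C with hD
  have hDeq : D = ⋃ l : Λ, (l : G) • C := by
    ext x
    simp only [hD, Set.mem_mul, Set.mem_iUnion, Set.mem_smul_set, smul_eq_mul]
    constructor
    · rintro ⟨l, hl, c, hc, rfl⟩; exact ⟨⟨l, hl⟩, c, hc, rfl⟩
    · rintro ⟨l, c, hc, rfl⟩; exact ⟨(l : G), l.2, c, hc, rfl⟩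
  have hDmeas : MeasurableSet D := by
    rw [hDeq]
    exact MeasurableSet.iUnion fun l => hCmeas.const_smul (l : G)
  have hDmul : ∀ l ∈ Λ, ∀ g ∈ D, l * g ∈ D := by
    intro l hl g hg
    obtain ⟨l', hl', c, hc, rfl⟩ := hg
    refine ⟨l * l', Λ.mul_mem hl hl', c, hc, ?_⟩
    show l * l' * c = l * (l' * c)
    rw [mul_assoc]
  have hDinv : ∀ (lam : Λ) (g : G), ((lam : G) * g ∈ D ↔ g ∈ D) := by
    intro lam g
    constructor
    · intro h
      have := hDmul _ (Λ.inv_mem lam.2) _ h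
      simpa [mul_assoc] using this
    · exact hDmul _ lam.2 g
  -- uniqueness of the coset
  have key : ∀ q q' : Quotient (QuotientGroup.rightRel (Λ.subgroupOf Γ)),
      (q.out : G) * ((q'.out : G))⁻¹ ∈ Λ → q = q' := by
    intro q q' h
    refine (Quotient.out_equiv_out.mp ?_).symm
    refine QuotientGroup.rightRel_apply.mpr (Subgroup.mem_subgroupOf.mpr ?_)
    push_cast
    exact h
  have huniq : ∀ (g : G) (q q' : Quotient (QuotientGroup.rightRel (Λ.subgroupOf Γ))),
      (q.out : G) * g ∈ D → (q'.out : G) * g ∈ D → q = q' := by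
    intro g q q' hq hq'
    obtain ⟨l₁, hl₁, c₁, hc₁, he₁⟩ := hq
    obtain ⟨l₂, hl₂, c₂, hc₂, he₂⟩ := hq'
    apply key
    have hcc : c₁ * c₂⁻¹ = l₁⁻¹ * ((q.out : G) * ((q'.out : G))⁻¹) * l₂ := by
      have h1 : c₁ = l₁⁻¹ * ((q.out : G) * g) := by rw [← he₁]; group
      have h2 : c₂ = l₂⁻¹ * ((q'.out : G) * g) := by rw [← he₂]; group
      rw [h1, h2]; group
    have hccΓ : c₁ * c₂⁻¹ ∈ Γ := by
      rw [hcc]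
      exact Γ.mul_mem (Γ.mul_mem (Γ.inv_mem (hΛΓ hl₁)) (Γ.mul_mem q.out.2
        (Γ.inv_mem q'.out.2))) (hΛΓ hl₂)
    have hccΛ : c₁ * c₂⁻¹ ∈ Λ := hC c₁ hc₁ c₂ hc₂ hccΓ
    have : (q.out : G) * ((q'.out : G))⁻¹ = l₁ * (c₁ * c₂⁻¹) * l₂⁻¹ := by
      rw [hcc]; group
    rw [this]
    exact Λ.mul_mem (Λ.mul_mem hl₁ hccΛ) (Λ.inv_mem hl₂)
  -- the unfolding lemma
  have hsmulΓ : ∀ (γ : Γ) (s : Set G), γ • s = (γ : G) • s := fun _ _ => rfl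
  have hsmulΛ : ∀ (l : Λ) (s : Set G), l • s = (l : G) • s := fun _ _ => rfl
  have hpair : Pairwise (Function.onFun (AEDisjoint μ)
      (fun q : Quotient (QuotientGroup.rightRel (Λ.subgroupOf Γ)) => (q.out : G) • FΓ)) := by
    intro q q' hne
    have hout : q.out ≠ q'.out := fun h => hne (by rw [← q.out_eq, ← q'.out_eq, h])
    have := hFΓ.aedisjoint hout
    simpa [Function.onFun, hsmulΓ] using this
  have hnullm : ∀ q : Quotient (QuotientGroup.rightRel (Λ.subgroupOf Γ)),
      NullMeasurableSet ((q.out : G) • FΓ) μ := by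
    intro q
    have := hFΓ.nullMeasurableSet_smul q.out
    simpa [hsmulΓ] using this
  have hF' : IsFundamentalDomain Λ
      (⋃ q : Quotient (QuotientGroup.rightRel (Λ.subgroupOf Γ)), (q.out : G) • FΓ) μ := by
    constructor
    · exact NullMeasurableSet.iUnion hnullm
    · filter_upwards [hFΓ.ae_covers] with x hx
      obtain ⟨γ, hγ⟩ := hx
      obtain ⟨q, hq⟩ : ∃ q, q = Quotient.mk (QuotientGroup.rightRel (Λ.subgroupOf Γ)) γ⁻¹ :=
        ⟨_, rfl⟩
      have hrel' : γ⁻¹ * (q.out)⁻¹ ∈ Λ.subgroupOf Γ :=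
        QuotientGroup.rightRel_apply.mp (Quotient.exact (by rw [q.out_eq, hq]))
      have hmemΓ : (q.out * γ : Γ) ∈ Λ.subgroupOf Γ := by
        have := (Λ.subgroupOf Γ).inv_mem hrel'
        simpa [mul_inv_rev] using this
      have hmem : ((q.out * γ : Γ) : G) ∈ Λ := Subgroup.mem_subgroupOf.mp hmemΓ
      refine ⟨⟨((q.out * γ : Γ) : G), hmem⟩, ?_⟩
      refine Set.mem_iUnion.mpr ⟨q, ?_⟩
      have heq : (⟨((q.out * γ : Γ) : G), hmem⟩ : Λ) • x = (q.out : G) • ((γ : G) * x) := by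
        show ((q.out * γ : Γ) : G) * x = (q.out : G) * ((γ : G) * x)
        push_cast
        group
      rw [heq]
      exact Set.smul_mem_smul_set hγ
    · intro l₁ l₂ hne
      simp only [Function.onFun, hsmulΛ, Set.smul_set_iUnion]
      rw [MeasureTheory.AEDisjoint.iUnion_left_iff]
      intro q
      rw [MeasureTheory.AEDisjoint.iUnion_right_iff]
      intro q'
      rw [smul_smul, smul_smul]
      have hne' : (⟨(l₁ : G), hΛΓ l₁.2⟩ * q.out : Γ) ≠ (⟨(l₂ : G), hΛΓ l₂.2⟩ * q'.out : Γ) := by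
        intro h
        have hG : (l₁ : G) * (q.out : G) = (l₂ : G) * (q'.out : G) := by
          have := congrArg (fun x : Γ => (x : G)) h
          push_cast at this
          exact this
        have hqq' : q = q' := by
          apply key
          have : (q.out : G) * ((q'.out : G))⁻¹ = (l₁ : G)⁻¹ * (l₂ : G) := by
            rw [eq_comm, inv_mul_eq_iff_eq_mul, ← mul_assoc, hG, mul_assoc,
              mul_inv_cancel, mul_one]
          rw [this]
          exact Λ.mul_mem (Λ.inv_mem l₁.2) l₂.2
        rw [hqq'] at hG
        exact hne (Subtype.ext (mul_right_cancel hG))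
      have := hFΓ.aedisjoint hne'
      simpa [Function.onFun, hsmulΓ] using this
  have hunfold : ∀ k : G → ℝ≥0∞, Measurable k → (∀ (lam : Λ) (g : G), k ((lam : G) * g) = k g) →
      ∫⁻ x in FΛ, k x ∂μ =
        ∫⁻ x in FΓ, ∑' q : Quotient (QuotientGroup.rightRel (Λ.subgroupOf Γ)),
          k ((q.out : G) * x) ∂μ := by
    intro k hk hkinv
    calc ∫⁻ x in FΛ, k x ∂μ
        = ∫⁻ x in ⋃ q : Quotient (QuotientGroup.rightRel (Λ.subgroupOf Γ)),
            (q.out : G) • FΓ, k x ∂μ := hFΛ.setLIntegral_eq hF' k (fun l x => hkinv l x)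
      _ = ∑' q : Quotient (QuotientGroup.rightRel (Λ.subgroupOf Γ)),
            ∫⁻ x in (q.out : G) • FΓ, k x ∂μ := lintegral_iUnion₀ hnullm hpair k
      _ = ∑' q : Quotient (QuotientGroup.rightRel (Λ.subgroupOf Γ)),
            ∫⁻ x in FΓ, k ((q.out : G) * x) ∂μ := by
            refine tsum_congr fun q => ?_
            have himg : (fun x => ((q.out : Γ) : G) * x) '' FΓ = ((q.out : Γ) : G) • FΓ := by
              rw [← Set.image_smul]; simp only [smul_eq_mul]
            have := (measurePreserving_mul_left μ ((q.out : Γ) : G)).setLIntegral_comp_emb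
              (measurableEmbedding_mulLeft ((q.out : Γ) : G)) k FΓ
            rw [this, himg]
      _ = ∫⁻ x in FΓ, ∑' q : Quotient (QuotientGroup.rightRel (Λ.subgroupOf Γ)),
            k ((q.out : G) * x) ∂μ :=
            (lintegral_tsum fun q : Quotient (QuotientGroup.rightRel (Λ.subgroupOf Γ)) =>
              (hk.comp (measurable_const_mul ((q.out : Γ) : G))).aemeasurable).symm
  -- integrals as lower integrals
  have habs : ∀ s : Set G, ∫ g in s, ‖φ g‖ ∂μ =
      (∫⁻ g in s, (‖φ g‖₊ : ℝ≥0∞) ∂μ).toReal := by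
    intro s
    rw [integral_eq_lintegral_of_nonneg_ae (Filter.Eventually.of_forall fun x =>
      norm_nonneg _) (hφmeas.norm.aestronglyMeasurable.congr
        (Filter.Eventually.of_forall fun x => rfl))]
    congr 1
    exact lintegral_congr fun x => by rw [ofReal_norm, enorm_eq_nnnorm]
  have hT : ∫⁻ x in FΛ, (‖φ x‖₊ : ℝ≥0∞) ∂μ < ⊤ := by
    have := hφint.2
    simp only [HasFiniteIntegral] at this
    convert this using 1
    apply lintegral_congr
    intro x
    rw [enorm_norm]; rfl
  have hAle : ∫⁻ g in FΛ ∩ D, (‖φ g‖₊ : ℝ≥0∞) ∂μ ≤ ∫⁻ x in FΛ, (‖φ x‖₊ : ℝ≥0∞) ∂μ :=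
    lintegral_mono_set Set.inter_subset_left
  have hBle : ∫⁻ g in FΛ \ D, (‖φ g‖₊ : ℝ≥0∞) ∂μ ≤ ∫⁻ x in FΛ, (‖φ x‖₊ : ℝ≥0∞) ∂μ :=
    lintegral_mono_set Set.diff_subset
  have hBA : ∫⁻ g in FΛ \ D, (‖φ g‖₊ : ℝ≥0∞) ∂μ < ∫⁻ g in FΛ ∩ D, (‖φ g‖₊ : ℝ≥0∞) ∂μ := by
    rw [habs, habs] at hgt
    exact (ENNReal.toReal_lt_toReal (hBle.trans_lt hT).ne (hAle.trans_lt hT).ne).mp hgt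
  -- unfolded versions
  have hindA : ∫⁻ g in FΛ ∩ D, (‖φ g‖₊ : ℝ≥0∞) ∂μ =
      ∫⁻ g in FΛ, D.indicator (fun g => (‖φ g‖₊ : ℝ≥0∞)) g ∂μ := by
    rw [lintegral_indicator hDmeas, Measure.restrict_restrict hDmeas, Set.inter_comm]
  have hindB : ∫⁻ g in FΛ \ D, (‖φ g‖₊ : ℝ≥0∞) ∂μ =
      ∫⁻ g in FΛ, Dᶜ.indicator (fun g => (‖φ g‖₊ : ℝ≥0∞)) g ∂μ := by
    rw [lintegral_indicator hDmeas.compl, Measure.restrict_restrict hDmeas.compl,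
      Set.inter_comm, Set.diff_eq]
  have hφnnmeas : Measurable fun g => (‖φ g‖₊ : ℝ≥0∞) := hφmeas.nnnorm.coe_nnreal_ennreal
  have hinvD : ∀ (lam : Λ) (g : G), D.indicator (fun g => (‖φ g‖₊ : ℝ≥0∞)) ((lam : G) * g) =
      D.indicator (fun g => (‖φ g‖₊ : ℝ≥0∞)) g := by
    intro lam g
    by_cases hg : g ∈ D
    · rw [Set.indicator_of_mem hg, Set.indicator_of_mem ((hDinv lam g).mpr hg), hnn]
    · rw [Set.indicator_of_notMem hg,
        Set.indicator_of_notMem (fun h => hg ((hDinv lam g).mp h))]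
  have hinvDc : ∀ (lam : Λ) (g : G), Dᶜ.indicator (fun g => (‖φ g‖₊ : ℝ≥0∞)) ((lam : G) * g) =
      Dᶜ.indicator (fun g => (‖φ g‖₊ : ℝ≥0∞)) g := by
    intro lam g
    by_cases hg : g ∈ D
    · rw [Set.indicator_of_notMem (by simpa using ((hDinv lam g).mpr hg)),
        Set.indicator_of_notMem (by simpa using hg)]
    · rw [Set.indicator_of_mem (by simpa using (fun h => hg ((hDinv lam g).mp h))),
        Set.indicator_of_mem (by simpa using hg), hnn]
  have hunfA : ∫⁻ g in FΛ ∩ D, (‖φ g‖₊ : ℝ≥0∞) ∂μ =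
      ∫⁻ x in FΓ, ∑' q : Quotient (QuotientGroup.rightRel (Λ.subgroupOf Γ)),
        D.indicator (fun g => (‖φ g‖₊ : ℝ≥0∞)) ((q.out : G) * x) ∂μ := by
    rw [hindA]
    exact hunfold _ (hφnnmeas.indicator hDmeas) hinvD
  have hunfB : ∫⁻ g in FΛ \ D, (‖φ g‖₊ : ℝ≥0∞) ∂μ =
      ∫⁻ x in FΓ, ∑' q : Quotient (QuotientGroup.rightRel (Λ.subgroupOf Γ)),
        Dᶜ.indicator (fun g => (‖φ g‖₊ : ℝ≥0∞)) ((q.out : G) * x) ∂μ := by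
    rw [hindB]
    exact hunfold _ (hφnnmeas.indicator hDmeas.compl) hinvDc
  have hunfT : ∫⁻ x in FΛ, (‖φ x‖₊ : ℝ≥0∞) ∂μ =
      ∫⁻ x in FΓ, ∑' q : Quotient (QuotientGroup.rightRel (Λ.subgroupOf Γ)),
        (‖φ ((q.out : G) * x)‖₊ : ℝ≥0∞) ∂μ := hunfold _ hφnnmeas hnn
  -- almost everywhere summability
  have hSmeas : Measurable fun x : G => ∑' q : Quotient (QuotientGroup.rightRel
      (Λ.subgroupOf Γ)), (‖φ ((q.out : G) * x)‖₊ : ℝ≥0∞) :=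
    Measurable.ennreal_tsum fun q => hφnnmeas.comp (measurable_const_mul _)
  have hSfin : ∀ᵐ x ∂μ.restrict FΓ, ∑' q : Quotient (QuotientGroup.rightRel
      (Λ.subgroupOf Γ)), (‖φ ((q.out : G) * x)‖₊ : ℝ≥0∞) < ⊤ := by
    apply ae_lt_top hSmeas
    rw [← hunfT]
    exact hT.ne
  -- consequences of finiteness at a point
  have hsummable : ∀ x : G, (∑' q : Quotient (QuotientGroup.rightRel
      (Λ.subgroupOf Γ)), (‖φ ((q.out : G) * x)‖₊ : ℝ≥0∞)) < ⊤ →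
      Summable fun q : Quotient (QuotientGroup.rightRel (Λ.subgroupOf Γ)) => ‖F q x‖ := by
    intro x hx
    have h1 : Summable fun q : Quotient (QuotientGroup.rightRel (Λ.subgroupOf Γ)) =>
        ‖φ ((q.out : G) * x)‖₊ := ENNReal.tsum_coe_ne_top_iff_summable.mp hx.ne
    have h2 : Summable fun q : Quotient (QuotientGroup.rightRel (Λ.subgroupOf Γ)) =>
        ‖φ ((q.out : G) * x)‖ := by
      have := NNReal.summable_coe.mpr h1
      simpa [coe_nnnorm] using this
    exact h2.congr fun q => (hFnorm q x).symm
  -- pointwise inequality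
  have hpt : ∀ᵐ x ∂μ.restrict FΓ,
      (∑' q : Quotient (QuotientGroup.rightRel (Λ.subgroupOf Γ)),
        D.indicator (fun g => (‖φ g‖₊ : ℝ≥0∞)) ((q.out : G) * x)) ≤
      (‖∑' q : Quotient (QuotientGroup.rightRel (Λ.subgroupOf Γ)), F q x‖₊ : ℝ≥0∞) +
      ∑' q : Quotient (QuotientGroup.rightRel (Λ.subgroupOf Γ)),
        Dᶜ.indicator (fun g => (‖φ g‖₊ : ℝ≥0∞)) ((q.out : G) * x) := by
    filter_upwards [hSfin] with x hx
    by_cases hex : ∃ q₀ : Quotient (QuotientGroup.rightRel (Λ.subgroupOf Γ)),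
        (q₀.out : G) * x ∈ D
    · obtain ⟨q₀, hq₀⟩ := hex
      have honly : ∀ q, q ≠ q₀ → (q.out : G) * x ∉ D :=
        fun q hne hmem => hne (huniq x q q₀ hmem hq₀)
      have hnormsum := hsummable x hx
      have hsF : Summable fun q => F q x := Summable.of_norm hnormsum
      have hlhs : (∑' q : Quotient (QuotientGroup.rightRel (Λ.subgroupOf Γ)),
          D.indicator (fun g => (‖φ g‖₊ : ℝ≥0∞)) ((q.out : G) * x)) =
          (‖φ ((q₀.out : G) * x)‖₊ : ℝ≥0∞) := by
        rw [tsum_eq_single q₀ (fun q hq => Set.indicator_of_notMem (honly q hq) _)]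
        rw [Set.indicator_of_mem hq₀]
      rw [hlhs]
      -- the real-valued estimate
      set R : ℝ := ∑' q : Quotient (QuotientGroup.rightRel (Λ.subgroupOf Γ)),
        (if q = q₀ then 0 else ‖F q x‖) with hR
      have hsumR : Summable fun q : Quotient (QuotientGroup.rightRel (Λ.subgroupOf Γ)) =>
          (if q = q₀ then (0:ℝ) else ‖F q x‖) := by
        apply Summable.of_nonneg_of_le (fun q => by positivity)
          (fun q => by split <;> simp [norm_nonneg]) hnormsum
      have hsplit : (∑' q, F q x) = F q₀ x +
          ∑' q : Quotient (QuotientGroup.rightRel (Λ.subgroupOf Γ)),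
            (if q = q₀ then 0 else F q x) := Summable.tsum_eq_add_tsum_ite hsF q₀
      have hrest : ‖∑' q : Quotient (QuotientGroup.rightRel (Λ.subgroupOf Γ)),
          (if q = q₀ then (0:ℂ) else F q x)‖ ≤ R := by
        refine (norm_tsum_le_tsum_norm ?_).trans_eq ?_
        · apply hsumR.congr
          intro q
          split <;> simp
        · rw [hR]
          exact tsum_congr fun q => by split <;> simp
      have hreal : ‖φ ((q₀.out : G) * x)‖ ≤
          ‖∑' q : Quotient (QuotientGroup.rightRel (Λ.subgroupOf Γ)), F q x‖ + R := by
        have h1 : F q₀ x = (∑' q, F q x) -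
            ∑' q : Quotient (QuotientGroup.rightRel (Λ.subgroupOf Γ)),
              (if q = q₀ then 0 else F q x) := by rw [hsplit]; ring
        calc ‖φ ((q₀.out : G) * x)‖ = ‖F q₀ x‖ := (hFnorm q₀ x).symm
          _ ≤ ‖∑' q, F q x‖ + ‖∑' q : Quotient (QuotientGroup.rightRel (Λ.subgroupOf Γ)),
              (if q = q₀ then (0:ℂ) else F q x)‖ := by rw [h1]; exact norm_sub_le _ _
          _ ≤ _ := by linarith [hrest]
      have hfnegeq : (∑' q : Quotient (QuotientGroup.rightRel (Λ.subgroupOf Γ)),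
          Dᶜ.indicator (fun g => (‖φ g‖₊ : ℝ≥0∞)) ((q.out : G) * x)) = ENNReal.ofReal R := by
        rw [hR, ENNReal.ofReal_tsum_of_nonneg (fun q => by positivity) hsumR]
        refine tsum_congr fun q => ?_
        by_cases hq : q = q₀
        · subst hq
          rw [Set.indicator_of_notMem (by simpa using hq₀)]
          simp
        · rw [Set.indicator_of_mem (by simpa using honly q hq)]
          rw [if_neg hq, hFnorm, ← enorm_eq_nnnorm, ← ofReal_norm]
      rw [hfnegeq]
      calc (‖φ ((q₀.out : G) * x)‖₊ : ℝ≥0∞) = ENNReal.ofReal ‖φ ((q₀.out : G) * x)‖ :=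
            (ofReal_norm _).symm
        _ ≤ ENNReal.ofReal (‖∑' q, F q x‖ + R) := ENNReal.ofReal_le_ofReal hreal
        _ = ENNReal.ofReal ‖∑' q, F q x‖ + ENNReal.ofReal R := by
            rw [ENNReal.ofReal_add (norm_nonneg _) (by
              rw [hR]; exact tsum_nonneg fun q => by positivity)]
        _ = (‖∑' q, F q x‖₊ : ℝ≥0∞) + ENNReal.ofReal R := by
            rw [ofReal_norm, enorm_eq_nnnorm]
    · push_neg at hex
      have : (∑' q : Quotient (QuotientGroup.rightRel (Λ.subgroupOf Γ)),
          D.indicator (fun g => (‖φ g‖₊ : ℝ≥0∞)) ((q.out : G) * x)) = 0 :=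
        ENNReal.tsum_eq_zero.mpr fun q => Set.indicator_of_notMem (hex q) _
      rw [this]
      exact bot_le
  -- the norm of the Poincaré series is bounded by the full sum
  have hPle : ∀ᵐ x ∂μ.restrict FΓ,
      (‖∑' q : Quotient (QuotientGroup.rightRel (Λ.subgroupOf Γ)), F q x‖₊ : ℝ≥0∞) ≤
      ∑' q : Quotient (QuotientGroup.rightRel (Λ.subgroupOf Γ)),
        (‖φ ((q.out : G) * x)‖₊ : ℝ≥0∞) := by
    filter_upwards [hSfin] with x hx
    have hnormsum := hsummable x hx
    calc (‖∑' q, F q x‖₊ : ℝ≥0∞) = ENNReal.ofReal ‖∑' q, F q x‖ :=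
          (ofReal_norm _).symm
      _ ≤ ENNReal.ofReal (∑' q, ‖F q x‖) :=
          ENNReal.ofReal_le_ofReal (norm_tsum_le_tsum_norm hnormsum)
      _ = ∑' q, ENNReal.ofReal ‖F q x‖ :=
          ENNReal.ofReal_tsum_of_nonneg (fun q => norm_nonneg _) hnormsum
      _ = _ := tsum_congr fun q => by rw [hFnorm, ← enorm_eq_nnnorm, ← ofReal_norm]
  -- measurability of the Poincaré series
  have hFqmeas : ∀ q : Quotient (QuotientGroup.rightRel (Λ.subgroupOf Γ)),
      Measurable fun x => F q x := by
    intro q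
    rw [hF]
    exact measurable_const.mul (hφmeas.comp (measurable_const_mul _))
  have hPmeas : AEMeasurable (fun x => ∑' q : Quotient (QuotientGroup.rightRel
      (Λ.subgroupOf Γ)), F q x) (μ.restrict FΓ) := by
    apply aemeasurable_of_tendsto_metrizable_ae
      (Filter.atTop : Filter (Finset (Quotient (QuotientGroup.rightRel (Λ.subgroupOf Γ)))))
      (f := fun s x => ∑ q ∈ s, F q x)
    · exact fun s => (s.measurable_sum fun q _ => hFqmeas q).aemeasurable
    · filter_upwards [hSfin] with x hx
      exact (Summable.of_norm (hsummable x hx)).hasSum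
  -- conclusion
  set I : ℝ≥0∞ := ∫⁻ x in FΓ, (‖∑' q : Quotient (QuotientGroup.rightRel (Λ.subgroupOf Γ)),
    F q x‖₊ : ℝ≥0∞) ∂μ with hI
  have hIfin : I < ⊤ := by
    rw [hI]
    calc ∫⁻ x in FΓ, (‖∑' q, F q x‖₊ : ℝ≥0∞) ∂μ
        ≤ ∫⁻ x in FΓ, ∑' q : Quotient (QuotientGroup.rightRel (Λ.subgroupOf Γ)),
            (‖φ ((q.out : G) * x)‖₊ : ℝ≥0∞) ∂μ := lintegral_mono_ae hPle
      _ = ∫⁻ x in FΛ, (‖φ x‖₊ : ℝ≥0∞) ∂μ := hunfT.symm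
      _ < ⊤ := hT
  have hfnegmeas : Measurable fun x => ∑' q : Quotient (QuotientGroup.rightRel
      (Λ.subgroupOf Γ)), Dᶜ.indicator (fun g => (‖φ g‖₊ : ℝ≥0∞)) ((q.out : G) * x) :=
    Measurable.ennreal_tsum fun q =>
      (hφnnmeas.indicator hDmeas.compl).comp (measurable_const_mul _)
  have hAIB : ∫⁻ g in FΛ ∩ D, (‖φ g‖₊ : ℝ≥0∞) ∂μ ≤
      I + ∫⁻ g in FΛ \ D, (‖φ g‖₊ : ℝ≥0∞) ∂μ := by
    rw [hunfA, hunfB, hI]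
    calc ∫⁻ x in FΓ, ∑' q : Quotient (QuotientGroup.rightRel (Λ.subgroupOf Γ)),
          D.indicator (fun g => (‖φ g‖₊ : ℝ≥0∞)) ((q.out : G) * x) ∂μ
        ≤ ∫⁻ x in FΓ, ((‖∑' q, F q x‖₊ : ℝ≥0∞) +
            ∑' q : Quotient (QuotientGroup.rightRel (Λ.subgroupOf Γ)),
              Dᶜ.indicator (fun g => (‖φ g‖₊ : ℝ≥0∞)) ((q.out : G) * x)) ∂μ :=
          lintegral_mono_ae hpt
      _ = _ := lintegral_add_right _ hfnegmeas
  have hIpos : 0 < I := by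
    rcases eq_zero_or_pos I with h0 | hpos
    · exfalso
      rw [h0, zero_add] at hAIB
      exact absurd (hAIB.trans_lt hBA) (lt_irrefl _)
    · exact hpos
  have hresult : 0 < ∫ g in FΓ, ‖∑' q : Quotient (QuotientGroup.rightRel
      (Λ.subgroupOf Γ)), F q g‖ ∂μ := by
    rw [integral_eq_lintegral_of_nonneg_ae (Filter.Eventually.of_forall fun x =>
      norm_nonneg _) (by
        have h1 : AEStronglyMeasurable (fun x => ∑' q : Quotient (QuotientGroup.rightRel
            (Λ.subgroupOf Γ)), F q x) (μ.restrict FΓ) :=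
          aestronglyMeasurable_iff_aemeasurable.mpr hPmeas
        exact h1.norm.congr (Filter.Eventually.of_forall fun x =>
          rfl))]
    have heq : ∫⁻ x in FΓ, ENNReal.ofReal ‖∑' q, F q x‖ ∂μ = I := by
      rw [hI]
      apply lintegral_congr
      intro x
      rw [ofReal_norm, enorm_eq_nnnorm]
    rw [heq]
    exact ENNReal.toReal_pos hIpos.ne' hIfin.ne
  simpa only [hF] using hresult
end

section
/- Suppose m, s, h, N are real with h, N > 0, m ≥ 4π/(Nh) + 8/3, and 1 < s < m/2. If Γ((s+1)/2) · Γ((s−1)/2) · 2^{m/2−1} / Γ(m/2−1) · (π/(Nh))^{m/2−s} / (m/2 − s) ≤ π, then h·(h/(2π))^{m/2−1} · ∫_{2π/(Nh)}^∞ e^{−y} y^{m/2−2} dy > (1/2) · (h/π)^{s} · Γ((s+1)/2) Γ((s−1)/2) · N^{s−m/2} / (m/2 − s). -/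
open Real MeasureTheory

section NonvanishingAux
open Set
lemma artanh_lb {u : ℝ} (h0 : 0 < u) (h1 : u < 1) :
    2*u + 2*u^3/3 < Real.log ((1+u)/(1-u)) := by
  have h1u : (0:ℝ) < 1 + u := by linarith
  have h1u' : (0:ℝ) < 1 - u := by linarith
  set F : ℝ → ℝ := fun x => Real.log (1+x) - Real.log (1-x) - (2*x + 2*x^3/3) with hF
  have key : ∀ x ∈ Set.Ico (0:ℝ) 1, HasDerivAt F (1/(1+x) + 1/(1-x) - (2 + 2*x^2)) x := by
    intro x hx
    have hx1 : (0:ℝ) < 1 + x := by have := hx.1; linarith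
    have hx2 : (0:ℝ) < 1 - x := by have := hx.2; linarith
    have d1 : HasDerivAt (fun y : ℝ => Real.log (1+y)) (1/(1+x)) x := by
      have : HasDerivAt (fun y : ℝ => 1 + y) 1 x := (hasDerivAt_id x).const_add 1
      simpa [Function.comp_def] using (Real.hasDerivAt_log hx1.ne').comp x this
    have d2 : HasDerivAt (fun y : ℝ => Real.log (1-y)) (-(1/(1-x))) x := by
      have : HasDerivAt (fun y : ℝ => 1 - y) (-1) x := by
        simpa using (hasDerivAt_id x).const_sub 1
      have := (Real.hasDerivAt_log hx2.ne').comp x this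
      simpa [div_eq_mul_inv, Function.comp_def] using this
    have d3 : HasDerivAt (fun y : ℝ => 2*y + 2*y^3/3) (2 + 2*x^2) x := by
      have : HasDerivAt (fun y : ℝ => 2*y + 2*y^3/3) (2*1 + 2*(3*x^2)/3) x := by
        exact (((hasDerivAt_id x).const_mul 2).add
          (((hasDerivAt_pow 3 x).const_mul 2).div_const 3))
      convert this using 1; ring
    simpa [F, sub_neg_eq_add, Pi.sub_def] using (d1.sub d2).sub d3
  have hmono : StrictMonoOn F (Set.Ico (0:ℝ) 1) := by
    apply strictMonoOn_of_deriv_pos (convex_Ico 0 1)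
    · exact ContinuousOn.sub (ContinuousOn.sub
        (Real.continuousOn_log.comp (by fun_prop) (fun x hx => by
          have : (0:ℝ) < 1 + x := by have := hx.1; linarith
          simp [this.ne']))
        (Real.continuousOn_log.comp (by fun_prop) (fun x hx => by
          have : (0:ℝ) < 1 - x := by have := hx.2; linarith
          simp [sub_ne_zero]; intro e; exact absurd e.symm (ne_of_lt hx.2)))) (by fun_prop)
    · intro x hx
      rw [interior_Ico] at hx
      obtain ⟨hx0, hx1⟩ := hx
      rw [(key x ⟨hx0.le, hx1⟩).deriv]
      have hx2 : (0:ℝ) < 1 - x := by linarith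
      have hx3 : (0:ℝ) < 1 + x := by linarith
      rw [div_add_div _ _ hx3.ne' hx2.ne']
      have : (1-x) + (1+x) = 2 := by ring
      have h2 : (1+x)*(1-x) = 1 - x^2 := by ring
      rw [sub_pos]
      rw [lt_div_iff₀ (by nlinarith)]
      nlinarith [pow_pos hx0 4]
  have h0F : F 0 = 0 := by simp [F]
  have := hmono (Set.mem_Ico.mpr ⟨le_refl 0, one_pos⟩) (Set.mem_Ico.mpr ⟨h0.le, h1⟩) h0
  rw [h0F] at this
  have hlog : Real.log ((1+u)/(1-u)) = Real.log (1+u) - Real.log (1-u) :=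
    Real.log_div h1u.ne' h1u'.ne'
  rw [hlog]
  simp only [F] at this
  linarith

lemma ptwise {b x : ℝ} (hx : 0 < x) (hxb : x < b) :
    (b-x) ^ (3*b^3) * Real.exp (-(b-x)^3) < (b+x) ^ (3*b^3) * Real.exp (-(b+x)^3) := by
  have hb : 0 < b := hx.trans hxb
  have hbx : 0 < b - x := by linarith
  have hbx' : 0 < b + x := by linarith
  rw [Real.rpow_def_of_pos hbx, Real.rpow_def_of_pos hbx', ← Real.exp_add, ← Real.exp_add]
  apply Real.exp_lt_exp.mpr
  have hu0 : 0 < x/b := div_pos hx hb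
  have hu1 : x/b < 1 := (div_lt_one hb).mpr hxb
  have key := artanh_lb hu0 hu1
  have hd1 : (0:ℝ) < 1 - x/b := sub_pos.mpr hu1
  have hrw : (1 + x/b)/(1 - x/b) = (b+x)/(b-x) := by
    rw [div_eq_div_iff hd1.ne' hbx.ne']; field_simp
  rw [hrw, Real.log_div hbx'.ne' hbx.ne'] at key
  have hmul := (mul_lt_mul_iff_right₀ (show (0:ℝ) < 3*b^3 by positivity)).mpr key
  have hexp : 3*b^3 * (2*(x/b) + 2*(x/b)^3/3) = 6*b^2*x + 2*x^3 := by
    field_simp; ring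
  rw [hexp] at hmul
  nlinarith [hmul]

lemma cube_root_cube {z : ℝ} (hz : 0 ≤ z) : (z ^ ((1:ℝ)/3)) ^ (3:ℕ) = z := by
  rw [← Real.rpow_natCast (z ^ ((1:ℝ)/3)) 3, ← Real.rpow_mul hz]
  norm_num

lemma cube_subst (a l r : ℝ) (hl : 0 ≤ l) (hr : 0 ≤ r) :
    ∫ y in Ioc l r, Real.exp (-y) * y^(a-1)
      = ∫ x in Ioc (l^((1:ℝ)/3)) (r^((1:ℝ)/3)),
          3 * x^(3*a-1) * Real.exp (-x^3) := by
  have hsm : StrictMono (fun z : ℝ => z ^ (3:ℕ)) := Odd.strictMono_pow ⟨1, by norm_num⟩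
  have hIocsub : Ioc l r ⊆ Ioi (0:ℝ) := fun y hy => lt_of_le_of_lt hl hy.1
  have key := MeasureTheory.integral_comp_rpow_Ioi
    ((Ioc l r).indicator (fun y => Real.exp (-y) * y^(a-1))) (show (3:ℝ) ≠ 0 by norm_num)
  have hrhs : ∫ x in Ioi (0:ℝ),
      (Ioc l r).indicator (fun y => Real.exp (-y) * y^(a-1)) x
      = ∫ y in Ioc l r, Real.exp (-y) * y^(a-1) := by
    rw [setIntegral_indicator measurableSet_Ioc, Set.inter_eq_right.mpr hIocsub]
  have hmem : ∀ x : ℝ, (x ^ (3:ℕ) ∈ Ioc l r) ↔ x ∈ Ioc (l^((1:ℝ)/3)) (r^((1:ℝ)/3)) := by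
    intro x
    constructor
    · rintro ⟨h1, h2⟩
      refine ⟨hsm.lt_iff_lt.mp ?_, hsm.le_iff_le.mp ?_⟩
      · rw [cube_root_cube hl]; exact h1
      · rw [cube_root_cube hr]; exact h2
    · rintro ⟨h1, h2⟩
      constructor
      · have := hsm.lt_iff_lt.mpr h1; rwa [cube_root_cube hl] at this
      · have := hsm.le_iff_le.mpr h2; rwa [cube_root_cube hr] at this
  have hlhs : ∫ x in Ioi (0:ℝ),
      (|(3:ℝ)| * x ^ ((3:ℝ)-1)) •
        (Ioc l r).indicator (fun y => Real.exp (-y) * y^(a-1)) (x ^ ((3:ℝ)))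
      = ∫ x in Ioc (l^((1:ℝ)/3)) (r^((1:ℝ)/3)), 3 * x^(3*a-1) * Real.exp (-x^3) := by
    have hsub : Ioc (l^((1:ℝ)/3)) (r^((1:ℝ)/3)) ⊆ Ioi (0:ℝ) := fun x hx =>
      lt_of_le_of_lt (Real.rpow_nonneg hl _) hx.1
    rw [← Set.inter_eq_right.mpr hsub, ← setIntegral_indicator measurableSet_Ioc]
    apply setIntegral_congr_fun measurableSet_Ioi
    intro x hx
    have hx0 : (0:ℝ) < x := hx
    dsimp only
    have hxr : x ^ ((3:ℝ)) = x ^ (3:ℕ) := by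
      rw [← Real.rpow_natCast x 3]; norm_num
    rw [hxr]
    by_cases hxm : x ^ (3:ℕ) ∈ Ioc l r
    · rw [Set.indicator_of_mem hxm, Set.indicator_of_mem ((hmem x).mp hxm)]
      simp only [smul_eq_mul]
      have e1 : x ^ ((3:ℝ)-1) = x ^ ((2:ℝ)) := by norm_num
      have e2 : ((x ^ (3:ℕ) : ℝ)) ^ (a-1) = x ^ (3*(a-1)) := by
        rw [← hxr, ← Real.rpow_mul hx0.le]
      have e3 : x ^ ((2:ℝ)) * x ^ (3*(a-1)) = x ^ (3*a-1) := by
        rw [← Real.rpow_add hx0]; ring_nf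
      rw [e1, e2, abs_of_nonneg (by norm_num : (0:ℝ) ≤ 3)]
      calc 3 * x ^ ((2:ℝ)) * (Real.exp (-x ^ (3:ℕ)) * x ^ (3*(a-1)))
          = 3 * (x ^ ((2:ℝ)) * x ^ (3*(a-1))) * Real.exp (-x ^ (3:ℕ)) := by ring
        _ = 3 * x ^ (3*a-1) * Real.exp (-x ^ (3:ℕ)) := by rw [e3]
    · rw [Set.indicator_of_notMem hxm,
        Set.indicator_of_notMem (fun hc => hxm ((hmem x).mpr hc))]
      simp
  rw [← hrhs, ← key, hlhs]

lemma tail_gt_half_gamma {a t : ℝ} (ht : 0 < t) (hta : t ≤ a - 1/3) :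
    Real.Gamma a / 2 < ∫ y in Ioi t, Real.exp (-y) * y ^ (a - 1) := by
  set c : ℝ := a - 1/3 with hcdef
  have hc : 0 < c := lt_of_lt_of_le ht hta
  have ha : 0 < a := by simp only [hcdef] at hc; linarith
  set f : ℝ → ℝ := fun y => Real.exp (-y) * y ^ (a-1) with hfdef
  have hfint : IntegrableOn f (Ioi 0) := Real.GammaIntegral_convergent ha
  have hnn : ∀ s : Set ℝ, MeasurableSet s → s ⊆ Ioi 0 →
      0 ≤ᵐ[volume.restrict s] f := by
    intro s hs hsub
    refine ae_restrict_of_forall_mem hs (fun y hy => ?_)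
    have : (0:ℝ) < y := hsub hy
    positivity
  -- split Gamma
  have hsplit : Real.Gamma a = (∫ y in Ioc 0 c, f y) + ∫ y in Ioi c, f y := by
    rw [Real.Gamma_eq_integral ha, ← setIntegral_union (Set.Ioc_disjoint_Ioi le_rfl)
      measurableSet_Ioi (hfint.mono_set Set.Ioc_subset_Ioi_self)
      (hfint.mono_set (Set.Ioi_subset_Ioi hc.le)), Set.Ioc_union_Ioi_eq_Ioi hc.le]
  -- monotone in t
  have hmono : ∫ y in Ioi c, f y ≤ ∫ y in Ioi t, f y :=
    setIntegral_mono_set (hfint.mono_set (Set.Ioi_subset_Ioi ht.le))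
      (hnn _ measurableSet_Ioi (Set.Ioi_subset_Ioi ht.le))
      (HasSubset.Subset.eventuallyLE (Set.Ioi_subset_Ioi hta))
  -- key strict inequality : head < middle chunk ≤ tail
  set b : ℝ := c ^ ((1:ℝ)/3) with hbdef
  have hb : 0 < b := Real.rpow_pos_of_pos hc _
  have hb3 : b ^ (3:ℕ) = c := cube_root_cube hc.le
  set ψ : ℝ → ℝ := fun x => 3 * x^(3*a-1) * Real.exp (-x^3) with hψdef
  have hψcont : Continuous ψ := by
    rw [continuous_iff_continuousAt]
    intro x
    have h1 : ContinuousAt (fun u : ℝ => u ^ (3*a-1)) x :=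
      Real.continuousAt_rpow_const x _ (Or.inr (by simp only [hcdef] at hc; linarith))
    exact (continuousAt_const.mul h1).mul ((Real.continuous_exp.comp
      (continuous_pow 3).neg).continuousAt)
  have hE1 : ∫ y in Ioc 0 c, f y = ∫ x in Ioc 0 b, ψ x := by
    rw [hfdef, cube_subst a 0 c le_rfl hc.le]
    simp [Real.zero_rpow (by norm_num : (1:ℝ)/3 ≠ 0), hψdef, hbdef]
  have h8 : ((8:ℝ)*c) ^ ((1:ℝ)/3) = 2*b := by
    rw [Real.mul_rpow (by norm_num) hc.le, hbdef]
    congr 1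
    rw [show (8:ℝ) = 2^(3:ℕ) by norm_num, ← Real.rpow_natCast 2 3,
      ← Real.rpow_mul (by norm_num)]
    norm_num
  have hE2 : ∫ y in Ioc c (8*c), f y = ∫ x in Ioc b (2*b), ψ x := by
    rw [hfdef, cube_subst a c (8*c) hc.le (by linarith), h8]
  -- interval integral comparison
  have hi1 : IntervalIntegrable (fun x => ψ (b + x)) volume 0 b :=
    (hψcont.comp (continuous_const.add continuous_id)).intervalIntegrable 0 b
  have hi2 : IntervalIntegrable (fun x => ψ (b - x)) volume 0 b :=
    (hψcont.comp (continuous_const.sub continuous_id)).intervalIntegrable 0 b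
  have hA : ∫ x in (0:ℝ)..b, ψ (b + x) = ∫ u in b..(2*b), ψ u := by
    rw [intervalIntegral.integral_comp_add_left ψ b]
    norm_num [two_mul]
  have hB : ∫ x in (0:ℝ)..b, ψ (b - x) = ∫ u in (0:ℝ)..b, ψ u := by
    rw [intervalIntegral.integral_comp_sub_left ψ b]
    norm_num
  have hpos : 0 < ∫ x in (0:ℝ)..b, (ψ (b + x) - ψ (b - x)) := by
    apply intervalIntegral.intervalIntegral_pos_of_pos_on (hi1.sub hi2) _ hb
    intro x hx
    have hkey := ptwise hx.1 hx.2
    have hrw : 3*a - 1 = 3*b^(3:ℕ) := by rw [hb3]; simp only [hcdef]; ring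
    simp only [hψdef, sub_pos, hrw]
    have h3 : (0:ℝ) < 3 := by norm_num
    calc 3 * ((b-x) ^ (3*b^3)) * Real.exp (-(b-x)^3)
        = 3 * ((b-x) ^ (3*b^3) * Real.exp (-(b-x)^3)) := by ring
      _ < 3 * ((b+x) ^ (3*b^3) * Real.exp (-(b+x)^3)) := by
          exact (mul_lt_mul_iff_right₀ h3).mpr hkey
      _ = 3 * ((b+x) ^ (3*b^3)) * Real.exp (-(b+x)^3) := by ring
  have hdiff : ∫ x in (0:ℝ)..b, (ψ (b + x) - ψ (b - x))
      = (∫ u in b..(2*b), ψ u) - ∫ u in (0:ℝ)..b, ψ u := by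
    rw [intervalIntegral.integral_sub hi1 hi2, hA, hB]
  have hstrict : ∫ y in Ioc 0 c, f y < ∫ y in Ioc c (8*c), f y := by
    rw [hE1, hE2, ← intervalIntegral.integral_of_le hb.le,
      ← intervalIntegral.integral_of_le (by linarith : b ≤ 2*b)]
    linarith [hdiff ▸ hpos]
  have hmid : ∫ y in Ioc c (8*c), f y ≤ ∫ y in Ioi c, f y :=
    setIntegral_mono_set (hfint.mono_set (Set.Ioi_subset_Ioi hc.le))
      (hnn _ measurableSet_Ioi (Set.Ioi_subset_Ioi hc.le))
      (HasSubset.Subset.eventuallyLE (fun y hy => hy.1))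
  have : ∫ y in Ioc 0 c, f y < ∫ y in Ioi c, f y := lt_of_lt_of_le hstrict hmid
  have hfin : Real.Gamma a / 2 < ∫ y in Ioi c, f y := by linarith [hsplit]
  exact lt_of_lt_of_le hfin hmono
end NonvanishingAux

theorem nonvanishing_key_inequality (m s h N : ℝ) (hh : 0 < h) (hN : 0 < N)
    (hm : 4 * π / (N * h) + 8 / 3 ≤ m) (hs1 : 1 < s) (hs2 : s < m / 2)
    (hineq : Real.Gamma ((s + 1) / 2) * Real.Gamma ((s - 1) / 2) * 2 ^ (m / 2 - 1)
        / Real.Gamma (m / 2 - 1) * (π / (N * h)) ^ (m / 2 - s) / (m / 2 - s) ≤ π) :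
    (1 / 2) * (h / π) ^ s * Real.Gamma ((s + 1) / 2) * Real.Gamma ((s - 1) / 2)
        * N ^ (s - m / 2) / (m / 2 - s)
      < h * (h / (2 * π)) ^ (m / 2 - 1)
          * ∫ y in Set.Ioi (2 * π / (N * h)), Real.exp (-y) * y ^ (m / 2 - 2) := by
  have hπ : (0:ℝ) < π := Real.pi_pos
  have hNh : 0 < N * h := mul_pos hN hh
  have ht : 0 < 2 * π / (N * h) := by positivity
  have hta : 2 * π / (N * h) ≤ (m / 2 - 1) - 1/3 := by
    have h4 : 4 * π / (N * h) = 2 * (2 * π / (N * h)) := by ring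
    rw [h4] at hm; linarith
  have key := tail_gt_half_gamma (a := m / 2 - 1) ht hta
  rw [show m / 2 - 1 - 1 = m / 2 - 2 by ring] at key
  have hK : 0 < h * (h / (2 * π)) ^ (m / 2 - 1) := by positivity
  have hGa : 0 < Real.Gamma (m / 2 - 1) := Real.Gamma_pos_of_pos (by linarith)
  have hA1 : 0 < Real.Gamma ((s + 1) / 2) := Real.Gamma_pos_of_pos (by linarith)
  have hA2 : 0 < Real.Gamma ((s - 1) / 2) := Real.Gamma_pos_of_pos (by linarith)
  have hms : (0:ℝ) < m / 2 - s := by linarith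
  -- core rpow identity
  have core : (h / π) ^ s * N ^ (s - m / 2) * π
      = h * (h / (2 * π)) ^ (m / 2 - 1) * 2 ^ (m / 2 - 1) * (π / (N * h)) ^ (m / 2 - s) := by
    apply Real.log_injOn_pos (Set.mem_Ioi.mpr (by positivity))
      (Set.mem_Ioi.mpr (by positivity))
    rw [Real.log_mul (by positivity) hπ.ne', Real.log_mul (by positivity) (by positivity),
      Real.log_mul (by positivity) (by positivity), Real.log_mul (by positivity) (by positivity),
      Real.log_mul hh.ne' (by positivity),
      Real.log_rpow (by positivity), Real.log_rpow hN, Real.log_rpow (by positivity),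
      Real.log_rpow (by norm_num), Real.log_rpow (by positivity),
      Real.log_div hh.ne' hπ.ne', Real.log_div hh.ne' (by positivity : (0:ℝ) < 2*π).ne',
      Real.log_div hπ.ne' hNh.ne', Real.log_mul (by norm_num : (2:ℝ) ≠ 0) hπ.ne',
      Real.log_mul hN.ne' hh.ne']
    ring
  set X1 := (h / (2 * π)) ^ (m / 2 - 1) with hX1
  set X2 := (2:ℝ) ^ (m / 2 - 1) with hX2
  set X3 := (π / (N * h)) ^ (m / 2 - s) with hX3
  set Y1 := (h / π) ^ s with hY1
  set Y2 := N ^ (s - m / 2) with hY2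
  set G := Real.Gamma (m / 2 - 1) with hG
  set A1 := Real.Gamma ((s + 1) / 2) with hA1d
  set A2 := Real.Gamma ((s - 1) / 2) with hA2d
  set D := m / 2 - s with hD
  set C := h * X1 * G / (2 * π) with hCdef
  have hCpos : 0 < C := by positivity
  clear_value X1 X2 X3 Y1 Y2 G A1 A2 D C
  have h1 : C * (A1 * A2 * X2 / G * X3 / D) ≤ C * π :=
    mul_le_mul_of_nonneg_left hineq hCpos.le
  have h2 : C * (A1 * A2 * X2 / G * X3 / D)
      = (1 / 2) * Y1 * A1 * A2 * Y2 / D := by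
    have e1 : C * (A1 * A2 * X2 / G * X3 / D)
        = G * (h * X1 * A1 * A2 * X2 * X3) / (G * (2 * π * D)) := by
      rw [hCdef]; ring
    rw [e1, mul_div_mul_left _ _ hGa.ne',
      div_eq_div_iff (mul_ne_zero (by positivity) hms.ne') hms.ne']
    linear_combination (-(A1 * A2 * D)) * core
  have h3 : C * π = h * X1 * (G / 2) := by
    rw [hCdef]; field_simp
  calc (1 / 2) * Y1 * A1 * A2 * Y2 / D
      ≤ h * X1 * (G / 2) := by rw [← h2, ← h3]; exact h1
    _ < _ := (mul_lt_mul_iff_right₀ hK).mpr key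
end
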